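/- arXiv:1606.07215 — 6 statements merged into one kernel-verified Lean document; each statement's English description precedes it below -/
import Mathlib

section
/- Let θ be a probability measure on ℝⁿ with finite second moment, let X be a random vector with distribution θ, and let G be a symmetric positive definite (n+m)×(n+m) matrix with blocks G = [[G^{XX}, G^{XU}], [G^{UX}, G^{UU}]] (G^{XX} of size n×n, G^{UU} of size m×m). Define q*(x) := −(G^{UU})⁻¹ G^{UX} (x − μ(θ)). Then q* is measurable, ∫_{ℝⁿ} q*(x) θ(dx) = 0, and tr(G · Cov([X; q*(X)])) = tr(P · Cov(θ)), where P := G^{XX} − G^{XU} (G^{UU})⁻¹ G^{UX}. -/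
open Matrix MeasureTheory

/-- Coordinatewise mean of a random vector. -/
noncomputable def vecMean {Ω : Type*} [MeasurableSpace Ω] (μ : Measure Ω)
    {k : Type*} (S : Ω → k → ℝ) : k → ℝ :=
  fun i => ∫ ω, S ω i ∂μ

/-- Covariance matrix of a random vector:
`Cov(S) = E[(S − E[S])(S − E[S])ᵀ]`. -/
noncomputable def vecCov {Ω : Type*} [MeasurableSpace Ω] (μ : Measure Ω)
    {k : Type*} (S : Ω → k → ℝ) : Matrix k k ℝ :=
  Matrix.of fun i j => ∫ ω, (S ω i - vecMean μ S i) * (S ω j - vecMean μ S j) ∂μ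

/-- Mean `μ(θ)` of a probability measure `θ` on `ℝⁿ`. -/
noncomputable def measMean {n : ℕ} (θ : Measure (Fin n → ℝ)) : Fin n → ℝ :=
  vecMean θ id

/-- Covariance `Cov(θ)` of a probability measure `θ` on `ℝⁿ`. -/
noncomputable def measCov {n : ℕ} (θ : Measure (Fin n → ℝ)) :
    Matrix (Fin n) (Fin n) ℝ :=
  vecCov θ id

section aux

variable {n : ℕ} {θ : Measure (Fin n → ℝ)} [IsProbabilityMeasure θ]

lemma int_norm (hθ2 : Integrable (fun x : Fin n → ℝ => ‖x‖ ^ 2) θ) :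
    Integrable (fun x : Fin n → ℝ => ‖x‖) θ := by
  refine ((integrable_const 1).add hθ2).mono' continuous_norm.aestronglyMeasurable ?_
  filter_upwards with x
  simp only [Real.norm_eq_abs, abs_of_nonneg (norm_nonneg x), Pi.add_apply]
  nlinarith [sq_nonneg (‖x‖ - 1), norm_nonneg x]

lemma int_id (hθ2 : Integrable (fun x : Fin n → ℝ => ‖x‖ ^ 2) θ) :
    Integrable (fun x : Fin n → ℝ => x) θ := by
  refine (int_norm hθ2).mono' aestronglyMeasurable_id ?_
  filter_upwards with x using le_rfl

lemma int_coord (hθ2 : Integrable (fun x : Fin n → ℝ => ‖x‖ ^ 2) θ) (i : Fin n) :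
    Integrable (fun x : Fin n → ℝ => x i) θ := by
  refine (int_norm hθ2).mono' (measurable_pi_apply i).aestronglyMeasurable ?_
  filter_upwards with x using (norm_le_pi_norm x i)

lemma int_prod (hθ2 : Integrable (fun x : Fin n → ℝ => ‖x‖ ^ 2) θ)
    (c : Fin n → ℝ) (i j : Fin n) :
    Integrable (fun x : Fin n → ℝ => (x i - c i) * (x j - c j)) θ := by
  have hg : Integrable (fun x : Fin n → ℝ => ‖x‖ ^ 2 + (2 * ‖c‖ * ‖x‖ + ‖c‖ ^ 2)) θ :=
    hθ2.add (((int_norm hθ2).const_mul (2 * ‖c‖)).add (integrable_const _))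
  refine hg.mono' ?_ ?_
  · exact (((measurable_pi_apply i).sub measurable_const).mul
      ((measurable_pi_apply j).sub measurable_const)).aestronglyMeasurable
  · filter_upwards with x
    have h1 : |x i - c i| ≤ ‖x‖ + ‖c‖ := by
      have := norm_le_pi_norm x i
      have := norm_le_pi_norm c i
      simp only [Real.norm_eq_abs] at *
      calc |x i - c i| ≤ |x i| + |c i| := abs_sub _ _
        _ ≤ ‖x‖ + ‖c‖ := by gcongr <;> assumption
    have h2 : |x j - c j| ≤ ‖x‖ + ‖c‖ := by
      have := norm_le_pi_norm x j
      have := norm_le_pi_norm c j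
      simp only [Real.norm_eq_abs] at *
      calc |x j - c j| ≤ |x j| + |c j| := abs_sub _ _
        _ ≤ ‖x‖ + ‖c‖ := by gcongr <;> assumption
    have := abs_mul (x i - c i) (x j - c j)
    simp only [Real.norm_eq_abs]
    rw [this]
    nlinarith [abs_nonneg (x i - c i), abs_nonneg (x j - c j), norm_nonneg x, norm_nonneg c]

lemma trace_fromBlocks' {p q : ℕ} (A : Matrix (Fin p) (Fin p) ℝ) (B : Matrix (Fin p) (Fin q) ℝ)
    (C : Matrix (Fin q) (Fin p) ℝ) (D : Matrix (Fin q) (Fin q) ℝ) :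
    (fromBlocks A B C D).trace = A.trace + D.trace := by
  simp [Matrix.trace, Matrix.diag, Fintype.sum_sum_type]
end aux

/-- For a probability measure `θ` on `ℝⁿ` with finite second
moment, a random vector `X` with distribution `θ`, and a symmetric positive
definite block matrix `G = [[Gxx, Gxu], [Gux, Guu]]`, the function
`q*(x) = −Guu⁻¹ Gux (x − μ(θ))` is measurable, has `∫ q* dθ = 0`, and
satisfies `tr(G · Cov([X; q*(X)])) = tr(P · Cov(θ))` where
`P = Gxx − Gxu Guu⁻¹ Gux`. -/
theorem stmt4 (n m : ℕ)
    (θ : Measure (Fin n → ℝ)) [IsProbabilityMeasure θ]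
    (hθ2 : Integrable (fun x => ‖x‖ ^ 2) θ)
    {Ω : Type*} [MeasurableSpace Ω] (P : Measure Ω) [IsProbabilityMeasure P]
    (X : Ω → Fin n → ℝ) (hX : Measurable X) (hXlaw : Measure.map X P = θ)
    (Gxx : Matrix (Fin n) (Fin n) ℝ) (Gxu : Matrix (Fin n) (Fin m) ℝ)
    (Gux : Matrix (Fin m) (Fin n) ℝ) (Guu : Matrix (Fin m) (Fin m) ℝ)
    (hG : (Matrix.fromBlocks Gxx Gxu Gux Guu).PosDef) :
    let G := Matrix.fromBlocks Gxx Gxu Gux Guu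
    let Pm := Gxx - Gxu * Guu⁻¹ * Gux
    let qstar : (Fin n → ℝ) → Fin m → ℝ :=
      fun x => -(Guu⁻¹.mulVec (Gux.mulVec (x - measMean θ)))
    Measurable qstar ∧ (∫ x, qstar x ∂θ) = 0 ∧
      (G * vecCov P (fun ω => Sum.elim (X ω) (qstar (X ω)))).trace =
        (Pm * measCov θ).trace := by
  intro G Pm qstar
  set A : Matrix (Fin m) (Fin n) ℝ := -(Guu⁻¹ * Gux) with hAdef
  have hq : ∀ x, qstar x = A.mulVec (x - measMean θ) := by
    intro x
    show -(Guu⁻¹.mulVec (Gux.mulVec (x - measMean θ))) = _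
    rw [hAdef, Matrix.neg_mulVec, Matrix.mulVec_mulVec]
  have hqcoord : ∀ (x : Fin n → ℝ) (b : Fin m),
      qstar x b = ∑ l, A b l * (x l - measMean θ l) := by
    intro x b
    rw [hq]
    simp [Matrix.mulVec, dotProduct]
  -- measurability
  have hqmeas : Measurable qstar := by
    refine measurable_pi_lambda _ fun b => ?_
    simp only [hqcoord]
    exact Finset.measurable_sum _ fun l _ =>
      measurable_const.mul ((measurable_pi_apply l).sub measurable_const)
  -- mean facts
  have hμ0 : ∀ i, ∫ x, x i ∂θ = measMean θ i := fun i => rfl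
  have hq0 : ∀ b, ∫ x, qstar x b ∂θ = 0 := by
    intro b
    simp only [hqcoord]
    refine (integral_finset_sum
      (f := fun (l : Fin n) (x : Fin n → ℝ) => A b l * (x l - measMean θ l)) _
      (fun l _ => ((int_coord hθ2 l).sub (integrable_const _)).const_mul _)).trans ?_
    refine Finset.sum_eq_zero fun l _ => ?_
    rw [integral_const_mul, integral_sub (int_coord hθ2 l) (integrable_const _), hμ0]
    simp
  have hqint : Integrable qstar θ := by
    have : qstar = fun x =>
        (LinearMap.toContinuousLinearMap (Matrix.mulVecLin A)) (x - measMean θ) := by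
      funext x; rw [hq]
      simp [LinearMap.coe_toContinuousLinearMap', Matrix.mulVecLin_apply]
    rw [this]
    exact (LinearMap.toContinuousLinearMap (Matrix.mulVecLin A)).integrable_comp
      ((int_id hθ2).sub (integrable_const _))
  have hqintzero : (∫ x, qstar x ∂θ) = 0 := by
    funext b
    have h := (ContinuousLinearMap.proj (R := ℝ) (φ := fun _ : Fin m => ℝ) b).integral_comp_comm hqint
    have h2 : (∫ x, qstar x ∂θ) b = ∫ x, qstar x b ∂θ := h.symm
    rw [Pi.zero_apply, h2, hq0]
  refine ⟨hqmeas, hqintzero, ?_⟩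
  -- transfer lemma
  have htrans : ∀ f : (Fin n → ℝ) → ℝ, Measurable f →
      (∫ ω, f (X ω) ∂P) = ∫ x, f x ∂θ := by
    intro f hf
    rw [← hXlaw, integral_map hX.aemeasurable hf.aestronglyMeasurable]
  set Y : Ω → (Fin n ⊕ Fin m) → ℝ := fun ω => Sum.elim (X ω) (qstar (X ω)) with hYdef
  have hmean : ∀ a, vecMean P Y a = Sum.elim (measMean θ) 0 a := by
    rintro (i | b)
    · exact htrans (fun x => x i) (measurable_pi_apply i)
    · exact (htrans (fun x => qstar x b) ((measurable_pi_apply b).comp hqmeas)).trans (hq0 b)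
  -- key integral identities
  have keyR : ∀ (c : Fin n → ℝ) (i : Fin n),
      (∫ x, (x i - measMean θ i) * (∑ l, c l * (x l - measMean θ l)) ∂θ) =
        ∑ l, c l * measCov θ i l := by
    intro c i
    have : (fun x : Fin n → ℝ => (x i - measMean θ i) * (∑ l, c l * (x l - measMean θ l)))
        = fun x => ∑ l, c l * ((x i - measMean θ i) * (x l - measMean θ l)) := by
      funext x
      rw [Finset.mul_sum]
      exact Finset.sum_congr rfl fun l _ => by ring
    rw [this]
    refine (integral_finset_sum
      (f := fun (l : Fin n) (x : Fin n → ℝ) =>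
        c l * ((x i - measMean θ i) * (x l - measMean θ l))) _
      (fun l _ => (int_prod hθ2 (measMean θ) i l).const_mul _)).trans ?_
    exact Finset.sum_congr rfl fun l _ => by rw [integral_const_mul]; rfl
  have keyB : ∀ (c₁ c₂ : Fin n → ℝ),
      (∫ x, (∑ k, c₁ k * (x k - measMean θ k)) * (∑ l, c₂ l * (x l - measMean θ l)) ∂θ) =
        ∑ k, ∑ l, c₁ k * c₂ l * measCov θ k l := by
    intro c₁ c₂
    have hrw : (fun x : Fin n → ℝ =>
        (∑ k, c₁ k * (x k - measMean θ k)) * (∑ l, c₂ l * (x l - measMean θ l)))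
        = fun x => ∑ k, ∑ l, (c₁ k * c₂ l) *
            ((x k - measMean θ k) * (x l - measMean θ l)) := by
      funext x
      rw [Finset.sum_mul_sum]
      exact Finset.sum_congr rfl fun k _ => Finset.sum_congr rfl fun l _ => by ring
    rw [hrw]
    refine (integral_finset_sum
      (f := fun (k : Fin n) (x : Fin n → ℝ) => ∑ l, (c₁ k * c₂ l) *
        ((x k - measMean θ k) * (x l - measMean θ l))) _
      (fun k _ => integrable_finset_sum _ fun l _ =>
        (int_prod hθ2 (measMean θ) k l).const_mul _)).trans ?_
    refine Finset.sum_congr rfl fun k _ => ?_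
    refine (integral_finset_sum
      (f := fun (l : Fin n) (x : Fin n → ℝ) => (c₁ k * c₂ l) *
        ((x k - measMean θ k) * (x l - measMean θ l))) _
      (fun l _ => (int_prod hθ2 (measMean θ) k l).const_mul _)).trans ?_
    exact Finset.sum_congr rfl fun l _ => by rw [integral_const_mul]; rfl
  have keyL : ∀ (c : Fin n → ℝ) (j : Fin n),
      (∫ x, (∑ k, c k * (x k - measMean θ k)) * (x j - measMean θ j) ∂θ) =
        ∑ k, c k * measCov θ k j := by
    intro c j
    have : (fun x : Fin n → ℝ => (∑ k, c k * (x k - measMean θ k)) * (x j - measMean θ j))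
        = fun x => ∑ k, c k * ((x k - measMean θ k) * (x j - measMean θ j)) := by
      funext x
      rw [Finset.sum_mul]
      exact Finset.sum_congr rfl fun k _ => by ring
    rw [this]
    refine (integral_finset_sum
      (f := fun (k : Fin n) (x : Fin n → ℝ) =>
        c k * ((x k - measMean θ k) * (x j - measMean θ j))) _
      (fun k _ => (int_prod hθ2 (measMean θ) k j).const_mul _)).trans ?_
    exact Finset.sum_congr rfl fun k _ => by rw [integral_const_mul]; rfl
  -- the covariance matrix of Y
  have hcov : vecCov P Y = fromBlocks (measCov θ) (measCov θ * Aᵀ)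
      (A * measCov θ) (A * measCov θ * Aᵀ) := by
    ext a b
    show (∫ ω, (Y ω a - vecMean P Y a) * (Y ω b - vecMean P Y b) ∂P) = _
    rw [hmean a, hmean b]
    rcases a with i | i <;> rcases b with j | j <;>
      simp only [hYdef, Sum.elim_inl, Sum.elim_inr, Pi.zero_apply, sub_zero,
        Matrix.fromBlocks_apply₁₁, Matrix.fromBlocks_apply₁₂,
        Matrix.fromBlocks_apply₂₁, Matrix.fromBlocks_apply₂₂]
    · exact htrans (fun x => (x i - measMean θ i) * (x j - measMean θ j))
        (((measurable_pi_apply i).sub measurable_const).mul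
          ((measurable_pi_apply j).sub measurable_const))
    · refine (htrans (fun x => (x i - measMean θ i) * qstar x j)
        (((measurable_pi_apply i).sub measurable_const).mul
          ((measurable_pi_apply j).comp hqmeas))).trans ?_
      simp only [hqcoord]
      refine (keyR (A j) i).trans ?_
      simp only [Matrix.mul_apply, Matrix.transpose_apply]
      exact Finset.sum_congr rfl fun l _ => mul_comm _ _
    · refine (htrans (fun x => qstar x i * (x j - measMean θ j))
        (((measurable_pi_apply i).comp hqmeas).mul
          ((measurable_pi_apply j).sub measurable_const))).trans ?_
      simp only [hqcoord]
      refine (keyL (A i) j).trans ?_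
      simp only [Matrix.mul_apply]
    · refine (htrans (fun x => qstar x i * qstar x j)
        (((measurable_pi_apply i).comp hqmeas).mul
          ((measurable_pi_apply j).comp hqmeas))).trans ?_
      simp only [hqcoord]
      refine (keyB (A i) (A j)).trans ?_
      rw [Finset.sum_comm]
      simp only [Matrix.mul_apply, Matrix.transpose_apply, Finset.sum_mul]
      exact Finset.sum_congr rfl fun l _ => Finset.sum_congr rfl fun k _ => by ring
  -- positive definiteness of Guu
  have hGuu : Guu.PosDef := by
    obtain ⟨hherm, hpos⟩ := Matrix.posDef_iff_dotProduct_mulVec.mp hG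
    refine Matrix.posDef_iff_dotProduct_mulVec.mpr ⟨(Matrix.isHermitian_fromBlocks_iff.mp hherm).2.2.2, fun v hv => ?_⟩
    have hv' : Sum.elim (0 : Fin n → ℝ) v ≠ 0 := by
      intro h
      apply hv
      funext i
      exact congrFun h (Sum.inr i)
    have := hpos (x := Sum.elim 0 v) hv'
    simpa [Matrix.fromBlocks_mulVec, sumElim_dotProduct_sumElim,
      Matrix.mulVec_zero] using this
  have hdet : IsUnit Guu.det := isUnit_iff_ne_zero.mpr (ne_of_gt hGuu.det_pos)
  have hGA : Guu * A = -Gux := by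
    rw [hAdef, Matrix.mul_neg, ← Matrix.mul_assoc, Matrix.mul_nonsing_inv _ hdet,
      Matrix.one_mul]
  have h2 : Guu * (A * measCov θ * Aᵀ) = -(Gux * (measCov θ * Aᵀ)) := by
    rw [Matrix.mul_assoc A, ← Matrix.mul_assoc Guu, hGA, Matrix.neg_mul]
  have h1 : Gxx * measCov θ + Gxu * (A * measCov θ) = Pm * measCov θ := by
    show _ = (Gxx - Gxu * Guu⁻¹ * Gux) * measCov θ
    rw [hAdef]
    simp only [Matrix.neg_mul, Matrix.mul_neg, Matrix.sub_mul, Matrix.mul_assoc]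
    rw [sub_eq_add_neg]
  rw [hcov]
  show (fromBlocks Gxx Gxu Gux Guu * fromBlocks (measCov θ) (measCov θ * Aᵀ)
    (A * measCov θ) (A * measCov θ * Aᵀ)).trace = (Pm * measCov θ).trace
  rw [Matrix.fromBlocks_multiply, trace_fromBlocks', h1, h2]
  simp
end

section
/- Let θ be a probability measure on ℝⁿ with finite second moment, let X be a random vector with distribution θ, and let G be a symmetric positive definite (n+m)×(n+m) matrix with blocks G = [[G^{XX}, G^{XU}], [G^{UX}, G^{UU}]], and set P := G^{XX} − G^{XU} (G^{UU})⁻¹ G^{UX}. Then for every measurable function q : ℝⁿ → ℝᵐ with ∫ ‖q(x)‖² θ(dx) < ∞ and ∫_{ℝⁿ} q(x) θ(dx) = 0, one has tr(G · Cov([X; q(X)])) ≥ tr(P · Cov(θ)). -/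
open Matrix MeasureTheory

section helpers
variable {Ω : Type*} [MeasurableSpace Ω] {μ : Measure Ω} {k : Type*} [Fintype k]

omit [Fintype k] in
lemma aux_int_mul {f g : Ω → ℝ} (hf : AEStronglyMeasurable f μ) (hg : AEStronglyMeasurable g μ)
    (h2f : Integrable (fun ω => f ω ^ 2) μ) (h2g : Integrable (fun ω => g ω ^ 2) μ) :
    Integrable (fun ω => f ω * g ω) μ := by
  refine Integrable.mono' ((h2f.add h2g).div_const 2) (hf.mul hg) ?_
  filter_upwards with ω
  have : |f ω * g ω| ≤ (f ω ^ 2 + g ω ^ 2) / 2 := by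
    rw [abs_mul]
    nlinarith [sq_nonneg (|f ω| - |g ω|), sq_abs (f ω), sq_abs (g ω), abs_nonneg (f ω),
      abs_nonneg (g ω)]
  rw [abs_mul] at this
  simpa using this

omit [Fintype k] in
lemma aux_sq_sub_const [IsProbabilityMeasure μ] {f : Ω → ℝ} (c : ℝ)
    (hm : AEStronglyMeasurable f μ) (h2 : Integrable (fun ω => f ω ^ 2) μ) :
    Integrable (fun ω => (f ω - c) ^ 2) μ := by
  refine Integrable.mono' (((h2.const_mul 2)).add (integrable_const (2 * c ^ 2)))
    ((hm.sub aestronglyMeasurable_const).pow 2) ?_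
  filter_upwards with ω
  have : |(f ω - c) ^ 2| ≤ 2 * f ω ^ 2 + 2 * c ^ 2 := by
    rw [abs_of_nonneg (sq_nonneg _)]
    nlinarith [sq_nonneg (f ω + c)]
  simpa using this

omit [Fintype k] in
lemma aux_centered_prod_int [IsProbabilityMeasure μ] {S : Ω → k → ℝ}
    (hm : ∀ i, AEStronglyMeasurable (fun ω => S ω i) μ)
    (h2 : ∀ i, Integrable (fun ω => (S ω i) ^ 2) μ) (c : k → ℝ) (i j : k) :
    Integrable (fun ω => (S ω i - c i) * (S ω j - c j)) μ :=
  aux_int_mul ((hm i).sub aestronglyMeasurable_const) ((hm j).sub aestronglyMeasurable_const)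
    (aux_sq_sub_const (c i) (hm i) (h2 i)) (aux_sq_sub_const (c j) (hm j) (h2 j))

lemma aux_quad_int [IsProbabilityMeasure μ] (M : Matrix k k ℝ) {S : Ω → k → ℝ}
    (hm : ∀ i, AEStronglyMeasurable (fun ω => S ω i) μ)
    (h2 : ∀ i, Integrable (fun ω => (S ω i) ^ 2) μ) (c : k → ℝ) :
    Integrable (fun ω => ∑ i, ∑ j, M i j * ((S ω j - c j) * (S ω i - c i))) μ := by
  refine integrable_finset_sum _ fun i _ => integrable_finset_sum _ fun j _ =>
    (aux_centered_prod_int hm h2 c j i).const_mul _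

lemma aux_trace_vecCov [IsProbabilityMeasure μ] (M : Matrix k k ℝ) {S : Ω → k → ℝ}
    (hm : ∀ i, AEStronglyMeasurable (fun ω => S ω i) μ)
    (h2 : ∀ i, Integrable (fun ω => (S ω i) ^ 2) μ) :
    (M * vecCov μ S).trace =
      ∫ ω, ∑ i, ∑ j, M i j * ((S ω j - vecMean μ S j) * (S ω i - vecMean μ S i)) ∂μ := by
  rw [integral_finset_sum]
  · unfold Matrix.trace Matrix.diag
    rw [Finset.sum_congr rfl]
    intro i _
    rw [integral_finset_sum]
    · rw [Matrix.mul_apply, Finset.sum_congr rfl]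
      intro j _
      rw [integral_const_mul]
      rfl
    · intro j _
      exact (aux_centered_prod_int hm h2 _ j i).const_mul _
  · intro i _
    exact integrable_finset_sum _ fun j _ => (aux_centered_prod_int hm h2 _ j i).const_mul _

lemma aux_comp_sq_int {ι : Type*} [Fintype ι] {S : Ω → ι → ℝ}
    (hm : ∀ i, AEStronglyMeasurable (fun ω => S ω i) μ)
    (h : Integrable (fun ω => ‖S ω‖ ^ 2) μ) (i : ι) :
    Integrable (fun ω => (S ω i) ^ 2) μ := by
  refine Integrable.mono' h ((hm i).pow 2) ?_
  filter_upwards with ω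
  have h1 : |S ω i| ≤ ‖S ω‖ := by
    simpa using norm_le_pi_norm (S ω) i
  have : (S ω i) ^ 2 ≤ ‖S ω‖ ^ 2 := by
    rw [← sq_abs]
    exact pow_le_pow_left₀ (abs_nonneg _) h1 2
  simpa [abs_of_nonneg (sq_nonneg (S ω i))] using this

end helpers

lemma aux_quad_ineq {n m : ℕ} (Gxx : Matrix (Fin n) (Fin n) ℝ) (Gxu : Matrix (Fin n) (Fin m) ℝ)
    (Gux : Matrix (Fin m) (Fin n) ℝ) (Guu : Matrix (Fin m) (Fin m) ℝ)
    (hG : (Matrix.fromBlocks Gxx Gxu Gux Guu).PosDef) (x : Fin n → ℝ) (u : Fin m → ℝ) :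
    ∑ i, ∑ j, (Gxx - Gxu * Guu⁻¹ * Gux) i j * (x j * x i) ≤
      ∑ i, ∑ j, (Matrix.fromBlocks Gxx Gxu Gux Guu) i j
        * (Sum.elim x u j * Sum.elim x u i) := by
  obtain ⟨hxx, hbc, hcb, huu⟩ := Matrix.isHermitian_fromBlocks_iff.mp hG.1
  have hGuu : Guu.PosDef := by
    refine Matrix.PosDef.of_dotProduct_mulVec_pos huu (fun y hy => ?_)
    have hz : Sum.elim (0 : Fin n → ℝ) y ≠ 0 := by
      intro h
      apply hy
      funext j
      exact congrFun h (Sum.inr j)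
    have := hG.dotProduct_mulVec_pos hz
    simpa [Matrix.fromBlocks_mulVec, dotProduct, Fintype.sum_sum_type] using this
  have : Invertible Guu := hGuu.isUnit.nonempty_invertible.some
  have key := Matrix.schur_complement_eq₂₂ Gxx Gxu x u huu (D := Guu)
  rw [hbc] at key
  have e1 : ∑ i, ∑ j, (Matrix.fromBlocks Gxx Gxu Gux Guu) i j
        * (Sum.elim x u j * Sum.elim x u i)
      = (star (Sum.elim x u)) ᵥ* (Matrix.fromBlocks Gxx Gxu Gux Guu) ⬝ᵥ (Sum.elim x u) := by
    simp only [star_trivial, dotProduct, Matrix.vecMul, Finset.sum_mul]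
    rw [Finset.sum_comm]
    apply Finset.sum_congr rfl; intro i _
    apply Finset.sum_congr rfl; intro j _
    ring
  have e2 : ∑ i, ∑ j, (Gxx - Gxu * Guu⁻¹ * Gux) i j * (x j * x i)
      = (star x) ᵥ* (Gxx - Gxu * Guu⁻¹ * Gux) ⬝ᵥ x := by
    simp only [star_trivial, dotProduct, Matrix.vecMul, Finset.sum_mul]
    rw [Finset.sum_comm]
    apply Finset.sum_congr rfl; intro i _
    apply Finset.sum_congr rfl; intro j _
    ring
  rw [e1, e2]
  rw [show (Sum.elim x u) = (x ⊕ᵥ u) from rfl] at key ⊢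
  rw [key, ← hbc]
  have h0 : 0 ≤ (star ((Guu⁻¹ * Gxuᴴ) *ᵥ x + u)) ᵥ* Guu ⬝ᵥ ((Guu⁻¹ * Gxuᴴ) *ᵥ x + u) := by
    rw [← Matrix.dotProduct_mulVec]
    exact hGuu.posSemidef.dotProduct_mulVec_nonneg _
  linarith

/-- For a probability measure `θ` on `ℝⁿ` with finite second
moment, a random vector `X` with distribution `θ`, and a symmetric positive
definite block matrix `G = [[Gxx, Gxu], [Gux, Guu]]` with Schur complement
`P = Gxx − Gxu Guu⁻¹ Gux`: for every measurable, θ-square-integrable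
`q : ℝⁿ → ℝᵐ` with `∫ q dθ = 0`, one has
`tr(G · Cov([X; q(X)])) ≥ tr(P · Cov(θ))`. -/
theorem stmt5 (n m : ℕ)
    (θ : Measure (Fin n → ℝ)) [IsProbabilityMeasure θ]
    (hθ2 : Integrable (fun x => ‖x‖ ^ 2) θ)
    {Ω : Type*} [MeasurableSpace Ω] (P : Measure Ω) [IsProbabilityMeasure P]
    (X : Ω → Fin n → ℝ) (hX : Measurable X) (hXlaw : Measure.map X P = θ)
    (Gxx : Matrix (Fin n) (Fin n) ℝ) (Gxu : Matrix (Fin n) (Fin m) ℝ)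
    (Gux : Matrix (Fin m) (Fin n) ℝ) (Guu : Matrix (Fin m) (Fin m) ℝ)
    (hG : (Matrix.fromBlocks Gxx Gxu Gux Guu).PosDef) :
    ∀ q : (Fin n → ℝ) → Fin m → ℝ, Measurable q →
      Integrable (fun x => ‖q x‖ ^ 2) θ → (∫ x, q x ∂θ) = 0 →
      ((Gxx - Gxu * Guu⁻¹ * Gux) * measCov θ).trace ≤
        ((Matrix.fromBlocks Gxx Gxu Gux Guu) *
          vecCov P (fun ω => Sum.elim (X ω) (q (X ω)))).trace := by
  intro q hq hq2 _
  set G := Matrix.fromBlocks Gxx Gxu Gux Guu with hGdef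
  set Pm := Gxx - Gxu * Guu⁻¹ * Gux with hPmdef
  set Z : Ω → (Fin n ⊕ Fin m) → ℝ := fun ω => Sum.elim (X ω) (q (X ω)) with hZdef
  -- measurability of components
  have hXm : ∀ i, Measurable (fun ω => X ω i) := fun i => (measurable_pi_apply i).comp hX
  have hqXm : ∀ j, Measurable (fun ω => q (X ω) j) :=
    fun j => (measurable_pi_apply j).comp (hq.comp hX)
  have hZm : ∀ i, AEStronglyMeasurable (fun ω => Z ω i) P := by
    rintro (i | j)
    · exact (hXm i).aestronglyMeasurable
    · exact (hqXm j).aestronglyMeasurable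
  -- square integrability over P
  have hX2P : Integrable (fun ω => ‖X ω‖ ^ 2) P := by
    rw [← hXlaw] at hθ2
    exact (integrable_map_measure
      ((measurable_norm.pow_const 2).aestronglyMeasurable) hX.aemeasurable).mp hθ2
  have hq2P : Integrable (fun ω => ‖q (X ω)‖ ^ 2) P := by
    rw [← hXlaw] at hq2
    exact (integrable_map_measure
      (((measurable_norm.comp hq).pow_const 2).aestronglyMeasurable) hX.aemeasurable).mp hq2
  have hZ2 : ∀ i, Integrable (fun ω => (Z ω i) ^ 2) P := by
    rintro (i | j)
    · exact aux_comp_sq_int (fun i => (hXm i).aestronglyMeasurable) hX2P i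
    · exact aux_comp_sq_int (fun j => (hqXm j).aestronglyMeasurable) hq2P j
  -- square integrability of id over θ
  have hidm : ∀ i : Fin n, AEStronglyMeasurable (fun x : Fin n → ℝ => id x i) θ :=
    fun i => (measurable_pi_apply i).aestronglyMeasurable
  have hid2 : ∀ i : Fin n, Integrable (fun x : Fin n → ℝ => (id x i) ^ 2) θ :=
    fun i => aux_comp_sq_int (S := fun x : Fin n → ℝ => x) hidm hθ2 i
  -- mean identification
  have hmean : ∀ i : Fin n, vecMean P Z (Sum.inl i) = vecMean θ id i := by
    intro i
    show (∫ ω, X ω i ∂P) = ∫ x, x i ∂θ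
    rw [← hXlaw, integral_map hX.aemeasurable (measurable_pi_apply i).aestronglyMeasurable]
  -- rewrite both traces as integrals over P
  rw [measCov, aux_trace_vecCov Pm hidm hid2, aux_trace_vecCov G hZm hZ2]
  rw [← hXlaw, integral_map hX.aemeasurable]
  swap
  · rw [hXlaw]
    refine (Finset.measurable_sum _ fun i _ => Finset.measurable_sum _ fun j _ =>
      ?_).aestronglyMeasurable
    exact (((measurable_pi_apply j).sub measurable_const).mul
      ((measurable_pi_apply i).sub measurable_const)).const_mul _
  -- integral mono
  rw [hXlaw]
  refine integral_mono (aux_quad_int Pm (fun i => (hXm i).aestronglyMeasurable)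
    (fun i => aux_comp_sq_int (fun i => (hXm i).aestronglyMeasurable) hX2P i) _)
    (aux_quad_int G hZm hZ2 _) ?_
  intro ω
  have key := aux_quad_ineq Gxx Gxu Gux Guu hG
    (fun i => X ω i - vecMean θ id i) (fun j => q (X ω) j - vecMean P Z (Sum.inr j))
  have hv : Sum.elim (fun i => X ω i - vecMean θ id i)
      (fun j => q (X ω) j - vecMean P Z (Sum.inr j)) = fun i => Z ω i - vecMean P Z i := by
    funext i
    cases i with
    | inl i => rw [hmean i]; simp [hZdef]
    | inr j => simp [hZdef]
  rw [hv] at key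
  exact key
end

section
/- Let θ be a probability measure on ℝⁿ with finite second moment, let X be a random vector with distribution θ, and let G be a symmetric positive definite (n+m)×(n+m) matrix with blocks G = [[G^{XX}, G^{XU}], [G^{UX}, G^{UU}]], and set P := G^{XX} − G^{XU} (G^{UU})⁻¹ G^{UX}. Then the infimum, over all measurable functions q : ℝⁿ → ℝᵐ satisfying ∫ ‖q(x)‖² θ(dx) < ∞ and ∫_{ℝⁿ} q(x) θ(dx) = 0, of tr(G · Cov([X; q(X)])) equals tr(P · Cov(θ)), and it is attained by q*(x) = −(G^{UU})⁻¹ G^{UX} (x − μ(θ)). -/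
open Matrix MeasureTheory
open scoped ENNReal

section Aux
variable {α : Type*} [MeasurableSpace α] {μ : Measure α}

lemma mul2_integrable {f g : α → ℝ} (hf : MemLp f 2 μ) (hg : MemLp g 2 μ) :
    Integrable (fun x => f x * g x) μ := by
  rw [← memLp_one_iff_integrable]
  have h : (1 : ℝ≥0∞) / 1 = 1 / 2 + 1 / 2 := by
    rw [ENNReal.div_add_div_same, one_add_one_eq_two, ENNReal.div_self two_ne_zero ENNReal.ofNat_ne_top]; simp
  exact (MemLp.smul (φ := f) (f := g) (r := 1) hg hf : _)

lemma integrable_quadForm {k : Type*} [Fintype k] (M : Matrix k k ℝ) (T : α → k → ℝ)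
    (hT : ∀ i, MemLp (fun a => T a i) 2 μ) :
    Integrable (fun a => T a ⬝ᵥ M *ᵥ T a) μ := by
  simp only [dotProduct, mulVec, Finset.mul_sum]
  refine integrable_finset_sum _ (fun i _ => integrable_finset_sum _ (fun j _ => ?_))
  have h := (mul2_integrable (hT i) (hT j)).const_mul (M i j)
  refine h.congr ?_
  filter_upwards with a
  ring

lemma trace_mul_vecCov {k : Type*} [Fintype k] (M : Matrix k k ℝ) (S : α → k → ℝ)
    (hS : ∀ i, MemLp (fun a => S a i) 2 μ) [IsFiniteMeasure μ] :
    (M * vecCov μ S).trace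
      = ∫ a, ((fun i => S a i - vecMean μ S i) ⬝ᵥ M *ᵥ (fun i => S a i - vecMean μ S i)) ∂μ := by
  classical
  set T : α → k → ℝ := fun a i => S a i - vecMean μ S i with hTdef
  have hT : ∀ i, MemLp (fun a => T a i) 2 μ := fun i => (hS i).sub (memLp_const _)
  have hTT : ∀ i j, Integrable (fun a => M i j * (T a j * T a i)) μ := fun i j =>
    (mul2_integrable (hT j) (hT i)).const_mul _
  have h1 : (M * vecCov μ S).trace = ∑ i, ∑ j, ∫ a, M i j * (T a j * T a i) ∂μ := by
    simp only [Matrix.trace, Matrix.diag, Matrix.mul_apply, vecCov, Matrix.of_apply]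
    refine Finset.sum_congr rfl (fun i _ => Finset.sum_congr rfl (fun j _ => ?_))
    rw [integral_const_mul]
  rw [h1]
  have h2 : ∀ i : k, (∑ j, ∫ a, M i j * (T a j * T a i) ∂μ)
      = ∫ a, ∑ j, M i j * (T a j * T a i) ∂μ :=
    fun i => (integral_finset_sum _ (fun j _ => hTT i j)).symm
  simp_rw [h2]
  rw [← integral_finset_sum _ (fun i _ => integrable_finset_sum _ (fun j _ => hTT i j))]
  refine integral_congr_ae (Filter.Eventually.of_forall fun a => ?_)
  simp only [hTdef, dotProduct, mulVec, Finset.mul_sum]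
  refine Finset.sum_congr rfl fun i _ => Finset.sum_congr rfl fun j _ => ?_
  ring

lemma quad_split {n m : ℕ} {Gxx : Matrix (Fin n) (Fin n) ℝ} {Gxu : Matrix (Fin n) (Fin m) ℝ}
    {Gux : Matrix (Fin m) (Fin n) ℝ} {Guu : Matrix (Fin m) (Fin m) ℝ}
    (hGxu : Gxuᵀ = Gux) (hGuuT : Guuᵀ = Guu) (hinv : Guu * Guu⁻¹ = 1)
    (v : Fin n → ℝ) (w : Fin m → ℝ) :
    Sum.elim v w ⬝ᵥ (Matrix.fromBlocks Gxx Gxu Gux Guu) *ᵥ Sum.elim v w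
      = v ⬝ᵥ (Gxx - Gxu * Guu⁻¹ * Gux) *ᵥ v
        + (w + Guu⁻¹ *ᵥ (Gux *ᵥ v)) ⬝ᵥ Guu *ᵥ (w + Guu⁻¹ *ᵥ (Gux *ᵥ v)) := by
  have symdot : ∀ a b : Fin m → ℝ, a ⬝ᵥ Guu *ᵥ b = b ⬝ᵥ Guu *ᵥ a := by
    intro a b
    rw [dotProduct_mulVec, ← mulVec_transpose, hGuuT, dotProduct_comm]
  have hxu : ∀ (v' : Fin n → ℝ) (w' : Fin m → ℝ), v' ⬝ᵥ Gxu *ᵥ w' = w' ⬝ᵥ Gux *ᵥ v' := by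
    intro v' w'
    rw [dotProduct_mulVec, ← mulVec_transpose, hGxu, dotProduct_comm]
  set u := Gux *ᵥ v with hu
  set c := Guu⁻¹ *ᵥ u with hc
  have hGc : Guu *ᵥ c = u := by
    rw [hc, mulVec_mulVec, hinv, one_mulVec]
  have h1 : (Gxu * Guu⁻¹ * Gux) *ᵥ v = Gxu *ᵥ c := by
    rw [hc, hu, ← mulVec_mulVec, ← mulVec_mulVec]
  rw [fromBlocks_mulVec, sumElim_dotProduct_sumElim]
  simp only [Sum.elim_comp_inl, Sum.elim_comp_inr, dotProduct_add, add_dotProduct, mulVec_add,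
    add_mulVec, sub_mulVec, dotProduct_sub, h1, hGc]
  have e1 : v ⬝ᵥ Gxu *ᵥ w = w ⬝ᵥ u := by rw [hxu v w]
  have e2 : v ⬝ᵥ Gxu *ᵥ c = c ⬝ᵥ u := by rw [hxu v c]
  have e3 : c ⬝ᵥ Guu *ᵥ w = w ⬝ᵥ u := by rw [symdot c w, hGc]
  linarith [e1, e2, e3]

end Aux

/-- The infimum, over all measurable `q : ℝⁿ → ℝᵐ` with
`∫ ‖q‖² dθ < ∞` and `∫ q dθ = 0`, of `tr(G · Cov([X; q(X)]))` equals
`tr(P · Cov(θ))`, and it is attained by `q*(x) = −Guu⁻¹ Gux (x − μ(θ))`. -/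
theorem stmt6 (n m : ℕ)
    (θ : Measure (Fin n → ℝ)) [IsProbabilityMeasure θ]
    (hθ2 : Integrable (fun x => ‖x‖ ^ 2) θ)
    {Ω : Type*} [MeasurableSpace Ω] (P : Measure Ω) [IsProbabilityMeasure P]
    (X : Ω → Fin n → ℝ) (hX : Measurable X) (hXlaw : Measure.map X P = θ)
    (Gxx : Matrix (Fin n) (Fin n) ℝ) (Gxu : Matrix (Fin n) (Fin m) ℝ)
    (Gux : Matrix (Fin m) (Fin n) ℝ) (Guu : Matrix (Fin m) (Fin m) ℝ)
    (hG : (Matrix.fromBlocks Gxx Gxu Gux Guu).PosDef) :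
    let G := Matrix.fromBlocks Gxx Gxu Gux Guu
    let Pm := Gxx - Gxu * Guu⁻¹ * Gux
    let qstar : (Fin n → ℝ) → Fin m → ℝ :=
      fun x => -(Guu⁻¹.mulVec (Gux.mulVec (x - measMean θ)))
    -- the value tr(P·Cov(θ)) is a lower bound over all feasible q
    (∀ q : (Fin n → ℝ) → Fin m → ℝ, Measurable q →
        Integrable (fun x => ‖q x‖ ^ 2) θ → (∫ x, q x ∂θ) = 0 →
        (Pm * measCov θ).trace ≤
          (G * vecCov P (fun ω => Sum.elim (X ω) (q (X ω)))).trace) ∧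
    -- and it is attained by the feasible function q*
    Measurable qstar ∧ Integrable (fun x => ‖qstar x‖ ^ 2) θ ∧
    (∫ x, qstar x ∂θ) = 0 ∧
    (G * vecCov P (fun ω => Sum.elim (X ω) (qstar (X ω)))).trace =
      (Pm * measCov θ).trace := by
  classical
  intro G Pm qstar
  -- block symmetry facts
  have hHerm : Matrix.fromBlocks Gxxᴴ Guxᴴ Gxuᴴ Guuᴴ = Matrix.fromBlocks Gxx Gxu Gux Guu := by
    rw [← fromBlocks_conjTranspose]; exact hG.1
  have hGxuT : Gxuᵀ = Gux := by
    have h := congrArg Matrix.toBlocks₂₁ hHerm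
    simpa [Matrix.toBlocks_fromBlocks₂₁, Matrix.conjTranspose_eq_transpose_of_trivial] using h
  have hGuuT : Guuᵀ = Guu := by
    have h := congrArg Matrix.toBlocks₂₂ hHerm
    simpa [Matrix.toBlocks_fromBlocks₂₂, Matrix.conjTranspose_eq_transpose_of_trivial] using h
  -- Guu is positive definite
  have hGuu : Guu.PosDef := by
    refine Matrix.PosDef.of_dotProduct_mulVec_pos ?_ (fun w hw => ?_)
    · rw [Matrix.IsHermitian, Matrix.conjTranspose_eq_transpose_of_trivial, hGuuT]
    · have hne : Sum.elim (0 : Fin n → ℝ) w ≠ 0 := by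
        intro hcontra
        exact hw (funext fun b => congrFun hcontra (Sum.inr b))
      have h := hG.dotProduct_mulVec_pos hne
      simpa [star_trivial, Matrix.fromBlocks_mulVec, Matrix.mulVec_zero,
        sumElim_dotProduct_sumElim] using h
  have hinv : Guu * Guu⁻¹ = 1 :=
    Matrix.mul_nonsing_inv _ (isUnit_iff_ne_zero.mpr hGuu.det_pos.ne')
  -- L² facts about the identity
  have hid2 : MemLp (fun x : Fin n → ℝ => x) 2 θ :=
    (memLp_two_iff_integrable_sq_norm aestronglyMeasurable_id).2 hθ2
  have hXi : ∀ a, MemLp (fun x : Fin n → ℝ => x a) 2 θ := fun a =>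
    (ContinuousLinearMap.proj (R := ℝ) (φ := fun _ : Fin n => ℝ) a).comp_memLp' hid2
  have hcent : ∀ a, MemLp (fun x : Fin n → ℝ => x a - measMean θ a) 2 θ := fun a =>
    (hXi a).sub (memLp_const _)
  have hintId : Integrable (fun x : Fin n → ℝ => x) θ := hid2.integrable one_le_two
  have hmean : ∫ x, x ∂θ = measMean θ := by
    funext a
    have h := ContinuousLinearMap.integral_comp_comm
      (ContinuousLinearMap.proj (R := ℝ) (φ := fun _ : Fin n => ℝ) a) hintId
    exact h.symm
  have hintCent : Integrable (fun x : Fin n → ℝ => x - measMean θ) θ :=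
    hintId.sub (integrable_const _)
  have hcent0 : ∫ x, (x - measMean θ) ∂θ = 0 := by
    rw [integral_sub hintId (integrable_const _), hmean, integral_const]
    simp
  have hPmtr : (Pm * measCov θ).trace
      = ∫ x, ((x - measMean θ) ⬝ᵥ Pm *ᵥ (x - measMean θ)) ∂θ := by
    rw [show measCov θ = vecCov θ id from rfl, trace_mul_vecCov Pm id (fun a => hXi a)]
    rfl
  -- the main decomposition
  have main : ∀ q : (Fin n → ℝ) → Fin m → ℝ, Measurable q →
      Integrable (fun x => ‖q x‖ ^ 2) θ → (∫ x, q x ∂θ) = 0 →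
      (G * vecCov P (fun ω => Sum.elim (X ω) (q (X ω)))).trace
        = (Pm * measCov θ).trace
          + ∫ x, ((q x + Guu⁻¹ *ᵥ (Gux *ᵥ (x - measMean θ)))
              ⬝ᵥ Guu *ᵥ (q x + Guu⁻¹ *ᵥ (Gux *ᵥ (x - measMean θ)))) ∂θ := by
    intro q hq hqL2 hq0
    have hq2 : MemLp q 2 θ := (memLp_two_iff_integrable_sq_norm hq.aestronglyMeasurable).2 hqL2
    have hqi : ∀ b, MemLp (fun x => q x b) 2 θ := fun b =>
      (ContinuousLinearMap.proj (R := ℝ) (φ := fun _ : Fin m => ℝ) b).comp_memLp' hq2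
    have hq0b : ∀ b, ∫ x, q x b ∂θ = 0 := fun b => by
      have h := ContinuousLinearMap.integral_comp_comm
        (ContinuousLinearMap.proj (R := ℝ) (φ := fun _ : Fin m => ℝ) b)
        (hq2.integrable one_le_two)
      simpa [hq0] using h
    set Sq : (Fin n → ℝ) → (Fin n ⊕ Fin m) → ℝ := fun x => Sum.elim x (q x) with hSqdef
    have hSmeas : ∀ i, Measurable (fun x => Sq x i) := by
      rintro (a | b)
      · exact measurable_pi_apply a
      · exact (measurable_pi_apply b).comp hq
    have hSℒp : ∀ i, MemLp (fun x => Sq x i) 2 θ := by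
      rintro (a | b)
      · exact hXi a
      · exact hqi b
    have key : ∀ f : (Fin n → ℝ) → ℝ, Measurable f → ∫ x, f x ∂θ = ∫ ω, f (X ω) ∂P := by
      intro f hf
      rw [← hXlaw, integral_map hX.aemeasurable hf.aestronglyMeasurable]
    have hmean' : vecMean P (fun ω => Sq (X ω)) = vecMean θ Sq := by
      funext i
      exact (key _ (hSmeas i)).symm
    have hcov : vecCov P (fun ω => Sum.elim (X ω) (q (X ω))) = vecCov θ Sq := by
      show vecCov P (fun ω => Sq (X ω)) = vecCov θ Sq
      funext i j
      show ∫ ω, (Sq (X ω) i - vecMean P (fun ω => Sq (X ω)) i)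
            * (Sq (X ω) j - vecMean P (fun ω => Sq (X ω)) j) ∂P
          = ∫ x, (Sq x i - vecMean θ Sq i) * (Sq x j - vecMean θ Sq j) ∂θ
      rw [hmean']
      exact (key _ (((hSmeas i).sub measurable_const).mul
        ((hSmeas j).sub measurable_const))).symm
    have hmeanSq : ∀ i, vecMean θ Sq i = Sum.elim (measMean θ) 0 i := by
      rintro (a | b)
      · rfl
      · show ∫ x, q x b ∂θ = 0
        exact hq0b b
    have hT : ∀ x, (fun i => Sq x i - vecMean θ Sq i) = Sum.elim (x - measMean θ) (q x) := by
      intro x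
      funext i
      rcases i with a | b
      · rw [hmeanSq]; rfl
      · rw [hmeanSq]
        show q x b - (0 : Fin m → ℝ) b = q x b
        simp
    have hlin : ∀ b, MemLp (fun x : Fin n → ℝ => (Guu⁻¹ *ᵥ (Gux *ᵥ (x - measMean θ))) b) 2 θ := by
      intro b
      have heq : (fun x : Fin n → ℝ => (Guu⁻¹ *ᵥ (Gux *ᵥ (x - measMean θ))) b)
          = fun x => ∑ a, (Guu⁻¹ * Gux) b a * (x a - measMean θ a) := by
        funext x
        rw [Matrix.mulVec_mulVec]
        simp [Matrix.mulVec, dotProduct]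
      rw [heq]
      exact memLp_finset_sum _ (fun a _ => ((hcent a).const_mul _))
    have hZi : ∀ b, MemLp
        (fun x => (q x + Guu⁻¹ *ᵥ (Gux *ᵥ (x - measMean θ))) b) 2 θ := fun b => by
      have := (hqi b).add (hlin b)
      exact this
    have hquadZ : Integrable (fun x => (q x + Guu⁻¹ *ᵥ (Gux *ᵥ (x - measMean θ)))
        ⬝ᵥ Guu *ᵥ (q x + Guu⁻¹ *ᵥ (Gux *ᵥ (x - measMean θ)))) θ :=
      integrable_quadForm _ _ hZi
    have hquadP : Integrable (fun x => (x - measMean θ) ⬝ᵥ Pm *ᵥ (x - measMean θ)) θ :=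
      integrable_quadForm _ _ (fun a => hcent a)
    rw [hcov, trace_mul_vecCov G Sq hSℒp, hPmtr, ← integral_add hquadP hquadZ]
    refine integral_congr_ae (Filter.Eventually.of_forall fun x => ?_)
    dsimp only
    rw [hT x]
    exact quad_split hGxuT hGuuT hinv _ _
  -- q* facts
  set L : (Fin n → ℝ) →L[ℝ] (Fin m → ℝ) :=
    LinearMap.toContinuousLinearMap (Matrix.mulVecLin (Guu⁻¹ * Gux)) with hL
  have hqstarEq : qstar = fun x => -(L (x - measMean θ)) := by
    funext x
    show -(Guu⁻¹ *ᵥ (Gux *ᵥ (x - measMean θ))) = _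
    rw [Matrix.mulVec_mulVec]
    rfl
  have hqstarMeas : Measurable qstar := by
    rw [hqstarEq]
    exact ((L.continuous.comp (continuous_id.sub continuous_const)).neg).measurable
  have hqstar2 : MemLp qstar 2 θ := by
    rw [hqstarEq]
    have := L.comp_memLp' (hid2.sub (memLp_const (measMean θ)))
    exact this.neg
  have hqstarL2 : Integrable (fun x => ‖qstar x‖ ^ 2) θ :=
    (memLp_two_iff_integrable_sq_norm hqstar2.aestronglyMeasurable).1 hqstar2
  have hqstar0 : (∫ x, qstar x ∂θ) = 0 := by
    rw [hqstarEq, integral_neg, ContinuousLinearMap.integral_comp_comm L hintCent, hcent0,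
      map_zero, neg_zero]
  refine ⟨fun q hq hL2 h0 => ?_, hqstarMeas, hqstarL2, hqstar0, ?_⟩
  · rw [main q hq hL2 h0]
    have hnn : 0 ≤ ∫ x, ((q x + Guu⁻¹ *ᵥ (Gux *ᵥ (x - measMean θ)))
        ⬝ᵥ Guu *ᵥ (q x + Guu⁻¹ *ᵥ (Gux *ᵥ (x - measMean θ)))) ∂θ := by
      refine integral_nonneg fun x => ?_
      have h := hGuu.posSemidef.dotProduct_mulVec_nonneg (q x + Guu⁻¹ *ᵥ (Gux *ᵥ (x - measMean θ)))
      simpa [star_trivial] using h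
    linarith
  · rw [main qstar hqstarMeas hqstarL2 hqstar0]
    have hZ0 : ∀ x : Fin n → ℝ,
        qstar x + Guu⁻¹ *ᵥ (Gux *ᵥ (x - measMean θ)) = 0 := fun x => by
      show -(Guu⁻¹ *ᵥ (Gux *ᵥ (x - measMean θ))) + Guu⁻¹ *ᵥ (Gux *ᵥ (x - measMean θ)) = 0
      exact neg_add_cancel _
    simp only [hZ0, zero_dotProduct, integral_zero, add_zero]
end

section
/- Fix a horizon T ∈ ℕ, a packet-drop probability p ∈ [0,1], matrices A ∈ ℝ^{n×n}, B^L ∈ ℝ^{n×m_L}, B^R ∈ ℝ^{n×m_R}, let M := [A, B^L, B^R] ∈ ℝ^{n×(n+m_L+m_R)}, and for each t ∈ {0,…,T} let R_t be a symmetric positive definite matrix of size (n+m_L+m_R). Define backwards: P_{T+1} = P̃_{T+1} = 0 (the n×n zero matrix); H_t = Mᵀ P_{t+1} M; H̃_t = Mᵀ P̃_{t+1} M; G_t = R_t + H_t; G̃_t = R_t + (1−p) H_t + p H̃_t; P_t = G_t^{XX} − [G_t^{XL}, G_t^{XR}] · ([[G_t^{LL}, G_t^{LR}], [G_t^{RL},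 G_t^{RR}]])⁻¹ · [G_t^{LX}; G_t^{RX}] (Schur complement of the lower-right (m_L+m_R)×(m_L+m_R) block of G_t); P̃_t = G̃_t^{XX} − G̃_t^{XL} (G̃_t^{LL})⁻¹ G̃_t^{LX} (Schur complement of the L-block in the top-left (n+m_L)×(n+m_L) submatrix of G̃_t). Then for every t ∈ {0,…,T}: G_t and G̃_t are symmetric positive definite (in particular the blocks being inverted are invertible, so the recursion is well defined), and P_t and P̃_t are symmetric positive semidefinite. -/
open Matrix

/-- The horizontally concatenated matrix `M = [A, Bˡ, Bʳ]`. -/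
def catM (n mL mR : ℕ) (A : Matrix (Fin n) (Fin n) ℝ)
    (BL : Matrix (Fin n) (Fin mL) ℝ) (BR : Matrix (Fin n) (Fin mR) ℝ) :
    Matrix (Fin n) (Fin n ⊕ (Fin mL ⊕ Fin mR)) ℝ :=
  Matrix.of fun i => Sum.elim (A i) (Sum.elim (BL i) (BR i))

/-- The backward Riccati-like recursion of the paper, returning the pair
`(P_t, P̃_t)` at time `t`, with `P_{T+1} = P̃_{T+1} = 0`:
`H_t = Mᵀ P_{t+1} M`, `H̃_t = Mᵀ P̃_{t+1} M`, `G_t = R_t + H_t`,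
`G̃_t = R_t + (1−p) H_t + p H̃_t`, `P_t` is the Schur complement of the
lower-right `(mL+mR)×(mL+mR)` block of `G_t`, and `P̃_t` is the Schur
complement of the `L`-block in the top-left `(n+mL)×(n+mL)` submatrix of
`G̃_t`. -/
noncomputable def backRec (n mL mR : ℕ) (T : ℕ) (p : ℝ)
    (A : Matrix (Fin n) (Fin n) ℝ) (BL : Matrix (Fin n) (Fin mL) ℝ)
    (BR : Matrix (Fin n) (Fin mR) ℝ)
    (R : ℕ → Matrix (Fin n ⊕ (Fin mL ⊕ Fin mR)) (Fin n ⊕ (Fin mL ⊕ Fin mR)) ℝ)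
    (t : ℕ) : Matrix (Fin n) (Fin n) ℝ × Matrix (Fin n) (Fin n) ℝ :=
  if T + 1 ≤ t then (0, 0)
  else
    let M := catM n mL mR A BL BR
    let Pn := (backRec n mL mR T p A BL BR R (t + 1)).1
    let Ptn := (backRec n mL mR T p A BL BR R (t + 1)).2
    let H := Mᵀ * Pn * M
    let Ht := Mᵀ * Ptn * M
    let G := R t + H
    let Gt := R t + (1 - p) • H + p • Ht
    let P := G.submatrix Sum.inl Sum.inl -
      G.submatrix Sum.inl Sum.inr * (G.submatrix Sum.inr Sum.inr)⁻¹ *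
        G.submatrix Sum.inr Sum.inl
    let Pt := Gt.submatrix Sum.inl Sum.inl -
      Gt.submatrix Sum.inl (fun j : Fin mL => Sum.inr (Sum.inl j)) *
        (Gt.submatrix (fun i : Fin mL => Sum.inr (Sum.inl i))
          (fun j : Fin mL => Sum.inr (Sum.inl j)))⁻¹ *
        Gt.submatrix (fun i : Fin mL => Sum.inr (Sum.inl i)) Sum.inl
    (P, Pt)
  termination_by T + 1 - t
  decreasing_by omega


lemma posDef_submatrix_inj {n m : Type*} [Fintype n] [Fintype m]
    {M : Matrix n n ℝ} (hM : M.PosDef) (f : m → n) (hf : Function.Injective f) :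
    (M.submatrix f f).PosDef := by
  classical
  refine PosDef.of_dotProduct_mulVec_pos (hM.1.submatrix f) fun x hx => ?_
  set y : n → ℝ := Function.extend f x 0 with hy
  have hyf : ∀ j, y (f j) = x j := fun j => hf.extend_apply x 0 j
  have hy0 : ∀ i, i ∉ Finset.univ.image f → y i = 0 := by
    intro i hi
    rw [hy, Function.extend_apply']
    · rfl
    · rintro ⟨j, rfl⟩
      exact hi (Finset.mem_image_of_mem f (Finset.mem_univ j))
  have hsum : ∀ g : n → ℝ, ∑ i, y i * g i = ∑ j, x j * g (f j) := by
    intro g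
    rw [← Finset.sum_subset (Finset.subset_univ (Finset.univ.image f))
      (fun i _ hi => by rw [hy0 i hi, zero_mul]),
      Finset.sum_image (fun a _ b _ h => hf h)]
    simp [hyf]
  have hyne : y ≠ 0 := by
    intro h
    apply hx
    funext j
    have := congrFun h (f j)
    simpa [hyf j] using this
  have key : star x ⬝ᵥ (M.submatrix f f) *ᵥ x = star y ⬝ᵥ M *ᵥ y := by
    simp only [dotProduct, mulVec, dotProduct, star, Pi.star_apply, star_trivial,
      submatrix_apply, id_eq]
    rw [hsum fun i => ∑ k, M i k * y k]
    congr 1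
    funext j
    congr 1
    have h2 : ∑ k, M (f j) k * y k = ∑ i, x i * M (f j) (f i) := by
      rw [← hsum fun k => M (f j) k]
      exact Finset.sum_congr rfl fun k _ => mul_comm _ _
    rw [h2]
    exact Finset.sum_congr rfl fun k _ => mul_comm _ _
  rw [key]
  exact hM.dotProduct_mulVec_pos hyne

lemma schur_psd {a b : Type*} [Fintype a] [Fintype b] [DecidableEq a] [DecidableEq b]
    {G : Matrix (a ⊕ b) (a ⊕ b) ℝ} (hG : G.PosDef) :
    (G.submatrix Sum.inl Sum.inl -
      G.submatrix Sum.inl Sum.inr * (G.submatrix Sum.inr Sum.inr)⁻¹ *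
        G.submatrix Sum.inr Sum.inl).PosSemidef := by
  have hD : (G.toBlocks₂₂).PosDef := posDef_submatrix_inj hG Sum.inr Sum.inr_injective
  haveI := hD.isUnit.invertible
  have hB : (G.toBlocks₁₂)ᴴ = G.toBlocks₂₁ := by
    ext i j
    simpa [toBlocks₁₂, toBlocks₂₁] using (hG.isHermitian.apply (Sum.inl j) (Sum.inr i)).symm
  have hfb : fromBlocks G.toBlocks₁₁ G.toBlocks₁₂ (G.toBlocks₁₂)ᴴ G.toBlocks₂₂ = G := by
    rw [hB, fromBlocks_toBlocks]
  have h := (PosDef.fromBlocks₂₂ G.toBlocks₁₁ G.toBlocks₁₂ hD).mp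
    (by rw [hfb]; exact hG.posSemidef)
  rw [hB] at h
  exact h

lemma psd_smul {n : Type*} [Fintype n] {M : Matrix n n ℝ} (hM : M.PosSemidef)
    {c : ℝ} (hc : 0 ≤ c) : (c • M).PosSemidef := by
  have herm : (c • M).IsHermitian := by
    have := hM.1.eq
    rw [conjTranspose_eq_transpose_of_trivial] at this
    simp [Matrix.IsHermitian, conjTranspose_eq_transpose_of_trivial, this]
  refine PosSemidef.of_dotProduct_mulVec_nonneg herm fun x => ?_
  rw [smul_mulVec, dotProduct_smul]
  exact mul_nonneg hc (hM.dotProduct_mulVec_nonneg x)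

set_option maxHeartbeats 1000000 in
lemma aux_psd (n mL mR : ℕ) (T : ℕ) (p : ℝ) (hp0 : 0 ≤ p) (hp1 : p ≤ 1)
    (A : Matrix (Fin n) (Fin n) ℝ) (BL : Matrix (Fin n) (Fin mL) ℝ)
    (BR : Matrix (Fin n) (Fin mR) ℝ)
    (R : ℕ → Matrix (Fin n ⊕ (Fin mL ⊕ Fin mR)) (Fin n ⊕ (Fin mL ⊕ Fin mR)) ℝ)
    (hR : ∀ t ≤ T, (R t).PosDef) :
    ∀ t, (backRec n mL mR T p A BL BR R t).1.PosSemidef ∧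
         (backRec n mL mR T p A BL BR R t).2.PosSemidef := by
  have key : ∀ k t, T + 1 - t ≤ k →
      (backRec n mL mR T p A BL BR R t).1.PosSemidef ∧
      (backRec n mL mR T p A BL BR R t).2.PosSemidef := by
    intro k
    induction k with
    | zero =>
      intro t ht
      rw [backRec]
      simp only [if_pos (by omega : T + 1 ≤ t)]
      exact ⟨.zero, .zero⟩
    | succ k ih =>
      intro t ht
      by_cases h : T + 1 ≤ t
      · rw [backRec]
        simp only [if_pos h]
        exact ⟨.zero, .zero⟩
      · obtain ⟨hPn, hPtn⟩ := ih (t + 1) (by omega)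
        rw [backRec]
        simp only [if_neg h]
        set M := catM n mL mR A BL BR with hM
        set Pn := (backRec n mL mR T p A BL BR R (t + 1)).1 with hPndef
        set Ptn := (backRec n mL mR T p A BL BR R (t + 1)).2 with hPtndef
        have hH : (Mᵀ * Pn * M).PosSemidef := by
          have := hPn.conjTranspose_mul_mul_same M
          rwa [conjTranspose_eq_transpose_of_trivial] at this
        have hHt : (Mᵀ * Ptn * M).PosSemidef := by
          have := hPtn.conjTranspose_mul_mul_same M
          rwa [conjTranspose_eq_transpose_of_trivial] at this
        have hG : (R t + Mᵀ * Pn * M).PosDef :=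
          (hR t (by omega)).add_posSemidef hH
        have hGt : (R t + (1 - p) • (Mᵀ * Pn * M)
            + p • (Mᵀ * Ptn * M)).PosDef :=
          ((hR t (by omega)).add_posSemidef (psd_smul hH (by linarith))).add_posSemidef
            (psd_smul hHt hp0)
        have hsub := posDef_submatrix_inj hGt (Sum.map id Sum.inl)
          (Function.Injective.sumMap (fun a b hab => hab) Sum.inl_injective)
        exact ⟨schur_psd hG, schur_psd hsub⟩
  exact fun t => key (T + 1) t (by omega)

/-- If every `R_t`, `t = 0,…,T`, is symmetric positive definite
and `p ∈ [0,1]`, then for every `t ∈ {0,…,T}` the matrices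
`G_t = R_t + H_t` and `G̃_t = R_t + (1−p) H_t + p H̃_t` are symmetric positive
definite, and `P_t`, `P̃_t` are symmetric positive semidefinite. -/
theorem stmt9 (n mL mR : ℕ) (hn : 0 < n) (hmL : 0 < mL) (hmR : 0 < mR)
    (T : ℕ) (p : ℝ) (hp0 : 0 ≤ p) (hp1 : p ≤ 1)
    (A : Matrix (Fin n) (Fin n) ℝ) (BL : Matrix (Fin n) (Fin mL) ℝ)
    (BR : Matrix (Fin n) (Fin mR) ℝ)
    (R : ℕ → Matrix (Fin n ⊕ (Fin mL ⊕ Fin mR)) (Fin n ⊕ (Fin mL ⊕ Fin mR)) ℝ)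
    (hR : ∀ t ≤ T, (R t).PosDef) :
    ∀ t ≤ T,
      let M := catM n mL mR A BL BR
      let H := Mᵀ * (backRec n mL mR T p A BL BR R (t + 1)).1 * M
      let Ht := Mᵀ * (backRec n mL mR T p A BL BR R (t + 1)).2 * M
      (R t + H).PosDef ∧
      (R t + (1 - p) • H + p • Ht).PosDef ∧
      (backRec n mL mR T p A BL BR R t).1.PosSemidef ∧
      (backRec n mL mR T p A BL BR R t).2.PosSemidef := by
  intro t ht M H Ht
  obtain ⟨hPn, hPtn⟩ := aux_psd n mL mR T p hp0 hp1 A BL BR R hR (t + 1)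
  have hH : H.PosSemidef := by
    have := hPn.conjTranspose_mul_mul_same M
    rwa [conjTranspose_eq_transpose_of_trivial] at this
  have hHt : Ht.PosSemidef := by
    have := hPtn.conjTranspose_mul_mul_same M
    rwa [conjTranspose_eq_transpose_of_trivial] at this
  refine ⟨(hR t ht).add_posSemidef hH,
    ((hR t ht).add_posSemidef (psd_smul hH (by linarith))).add_posSemidef (psd_smul hHt hp0),
    (aux_psd n mL mR T p hp0 hp1 A BL BR R hR t).1,
    (aux_psd n mL mR T p hp0 hp1 A BL BR R hR t).2⟩
end

section
/- Let θ be a probability measure on ℝⁿ with finite second moment, let X be a random vector with distribution θ, and let G and G̃ be symmetric matrices of size (n+m_L+m_R). For ū ∈ ℝ^{m_L}, u ∈ ℝ^{m_R}, and measurable q : ℝⁿ → ℝ^{m_L} with ∫ ‖q(x)‖² θ(dx) < ∞ and ∫ q(x) θ(dx) = 0, set S := [X; ū + q(X); u]. Then: (i) E[S] = [μ(θ); ū; u]; (ii) Cov(S) = Cov([X; q(X); 0]), where 0 ∈ ℝ^{m_R}; and consequently (iii) the infimum over all such (ū, u, q) of (E[S])ᵀ G (E[S]) + tr(G̃ ·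 Cov(S)) equals the sum of the infimum over (ū, u) ∈ ℝ^{m_L} × ℝ^{m_R} of [μ(θ); ū; u]ᵀ G [μ(θ); ū; u] and the infimum over all feasible q of tr(G̃ · Cov([X; q(X); 0])). -/
open Matrix MeasureTheory

/-- A feasible deviation function: measurable, θ-square-integrable, with
zero mean under `θ`. -/
def Feasible (n mL : ℕ) (θ : Measure (Fin n → ℝ))
    (q : (Fin n → ℝ) → Fin mL → ℝ) : Prop :=
  Measurable q ∧ Integrable (fun x => ‖q x‖ ^ 2) θ ∧ (∫ x, q x ∂θ) = 0

lemma aux_int_of_sq {α : Type*} [MeasurableSpace α] (μ : Measure α) [IsFiniteMeasure μ]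
    {k : ℕ} (f : α → Fin k → ℝ) (hm : AEStronglyMeasurable f μ)
    (h2 : Integrable (fun x => ‖f x‖ ^ 2) μ) : Integrable f μ := by
  refine ((integrable_const (1:ℝ)).add h2).mono' hm (ae_of_all _ fun x => ?_)
  simp only [Pi.add_apply]
  nlinarith [norm_nonneg (f x), sq_nonneg (‖f x‖ - 1)]

lemma aux_comp {α : Type*} [MeasurableSpace α] (μ : Measure α)
    {k : ℕ} (f : α → Fin k → ℝ) (hm : AEStronglyMeasurable f μ)
    (hf : Integrable f μ) (j : Fin k) : Integrable (fun x => f x j) μ := by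
  refine hf.norm.mono' ?_ (ae_of_all _ fun x => ?_)
  · exact (ContinuousLinearMap.proj (R := ℝ) (φ := fun _ : Fin k => ℝ) j).continuous.comp_aestronglyMeasurable hm
  · simpa using norm_le_pi_norm (f x) j

lemma aux_int_comp {α : Type*} [MeasurableSpace α] (μ : Measure α)
    {k : ℕ} (f : α → Fin k → ℝ) (hf : Integrable f μ) (j : Fin k) :
    ∫ x, f x j ∂μ = (∫ x, f x ∂μ) j :=
  ((ContinuousLinearMap.proj (R := ℝ) (φ := fun _ : Fin k => ℝ) j).integral_comp_comm hf)

lemma aux_sInf_add (A B : Set EReal) (hA : A.Nonempty) (hB : B.Nonempty)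
    (hAt : ∀ a ∈ A, a ≠ ⊤) (hBt : ∀ b ∈ B, b ≠ ⊤) :
    sInf {v | ∃ a ∈ A, ∃ b ∈ B, v = a + b} = sInf A + sInf B := by
  have hAtop : sInf A ≠ ⊤ := by
    obtain ⟨a, ha⟩ := hA
    exact ne_top_of_le_ne_top (hAt a ha) (sInf_le ha)
  have hBtop : sInf B ≠ ⊤ := by
    obtain ⟨b, hb⟩ := hB
    exact ne_top_of_le_ne_top (hBt b hb) (sInf_le hb)
  apply le_antisymm
  · refine EReal.le_add_of_forall_gt (Or.inr hBtop) (Or.inl hAtop) ?_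
    intro a' ha' b' hb'
    obtain ⟨a, haA, ha⟩ := sInf_lt_iff.mp ha'
    obtain ⟨b, hbB, hb⟩ := sInf_lt_iff.mp hb'
    exact le_trans (sInf_le ⟨a, haA, b, hbB, rfl⟩) (add_le_add ha.le hb.le)
  · refine le_sInf fun v hv => ?_
    obtain ⟨a, ha, b, hb, rfl⟩ := hv
    exact add_le_add (sInf_le ha) (sInf_le hb)

/-- With `S = [X; ū + q(X); u]` for feasible `q`:
(i) `E[S] = [μ(θ); ū; u]`; (ii) `Cov(S) = Cov([X; q(X); 0])`; and
(iii) the infimum over `(ū, u, q)` of `E[S]ᵀ G E[S] + tr(G̃ Cov(S))` equals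
the infimum over `(ū, u)` of `[μ(θ); ū; u]ᵀ G [μ(θ); ū; u]` plus the
infimum over feasible `q` of `tr(G̃ Cov([X; q(X); 0]))` (infima taken in the
extended reals). -/
theorem stmt12 (n mL mR : ℕ)
    (θ : Measure (Fin n → ℝ)) [IsProbabilityMeasure θ]
    (hθ2 : Integrable (fun x => ‖x‖ ^ 2) θ)
    {Ω : Type*} [MeasurableSpace Ω] (P : Measure Ω) [IsProbabilityMeasure P]
    (X : Ω → Fin n → ℝ) (hX : Measurable X) (hXlaw : Measure.map X P = θ)
    (G Gt : Matrix (Fin n ⊕ (Fin mL ⊕ Fin mR)) (Fin n ⊕ (Fin mL ⊕ Fin mR)) ℝ)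
    (hG : G.IsSymm) (hGt : Gt.IsSymm) :
    let Sfun : (Fin mL → ℝ) → (Fin mR → ℝ) → ((Fin n → ℝ) → Fin mL → ℝ) →
        Ω → (Fin n ⊕ (Fin mL ⊕ Fin mR)) → ℝ :=
      fun ub u q ω => Sum.elim (X ω) (Sum.elim (ub + q (X ω)) u)
    (∀ (ub : Fin mL → ℝ) (u : Fin mR → ℝ) (q : (Fin n → ℝ) → Fin mL → ℝ),
        Feasible n mL θ q →
        -- (i)
        vecMean P (Sfun ub u q) = Sum.elim (measMean θ) (Sum.elim ub u) ∧
        -- (ii)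
        vecCov P (Sfun ub u q) =
          vecCov P (fun ω => Sum.elim (X ω) (Sum.elim (q (X ω)) (0 : Fin mR → ℝ)))) ∧
    -- (iii)
    sInf {v : EReal | ∃ (ub : Fin mL → ℝ) (u : Fin mR → ℝ)
          (q : (Fin n → ℝ) → Fin mL → ℝ), Feasible n mL θ q ∧
          v = ((vecMean P (Sfun ub u q) ⬝ᵥ G.mulVec (vecMean P (Sfun ub u q)) +
              (Gt * vecCov P (Sfun ub u q)).trace : ℝ) : EReal)} =
      sInf {v : EReal | ∃ (ub : Fin mL → ℝ) (u : Fin mR → ℝ),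
          v = ((Sum.elim (measMean θ) (Sum.elim ub u) ⬝ᵥ
              G.mulVec (Sum.elim (measMean θ) (Sum.elim ub u)) : ℝ) : EReal)} +
      sInf {v : EReal | ∃ q : (Fin n → ℝ) → Fin mL → ℝ, Feasible n mL θ q ∧
          v = (((Gt * vecCov P
              (fun ω => Sum.elim (X ω) (Sum.elim (q (X ω)) (0 : Fin mR → ℝ)))).trace : ℝ)
            : EReal)} := by
  intro Sfun
  -- transfer lemmas along the law
  have hmap : ∀ g : (Fin n → ℝ) → ℝ, AEStronglyMeasurable g θ →
      ∫ ω, g (X ω) ∂P = ∫ x, g x ∂θ := by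
    intro g hg
    rw [← hXlaw] at hg ⊢
    exact (integral_map hX.aemeasurable hg).symm
  have hmapInt : ∀ g : (Fin n → ℝ) → ℝ, AEStronglyMeasurable g θ → Integrable g θ →
      Integrable (fun ω => g (X ω)) P := by
    intro g hgm hgi
    rw [← hXlaw] at hgm hgi
    exact (integrable_map_measure hgm hX.aemeasurable).mp hgi
  -- (i)
  have hmean : ∀ (ub : Fin mL → ℝ) (u : Fin mR → ℝ) (q : (Fin n → ℝ) → Fin mL → ℝ),
      Feasible n mL θ q →
      vecMean P (Sfun ub u q) = Sum.elim (measMean θ) (Sum.elim ub u) := by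
    intro ub u q hq
    obtain ⟨hqm, hq2, hq0⟩ := hq
    have hqint : Integrable q θ := aux_int_of_sq θ q hqm.aestronglyMeasurable hq2
    have hqjm : ∀ j, AEStronglyMeasurable (fun x => q x j) θ :=
      fun j => ((measurable_pi_apply j).comp hqm).aestronglyMeasurable
    have hqj : ∀ j, Integrable (fun x => q x j) θ :=
      fun j => aux_comp θ q hqm.aestronglyMeasurable hqint j
    have hqj0 : ∀ j, ∫ x, q x j ∂θ = 0 := by
      intro j
      rw [aux_int_comp θ q hqint j, hq0]
      rfl
    funext i
    rcases i with k | j | j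
    · show (∫ ω, X ω k ∂P) = ∫ x : Fin n → ℝ, x k ∂θ
      exact hmap (fun x => x k) (measurable_pi_apply k).aestronglyMeasurable
    · show (∫ ω, ub j + q (X ω) j ∂P) = ub j
      have hint : Integrable (fun ω => q (X ω) j) P := hmapInt _ (hqjm j) (hqj j)
      have hzero : ∫ ω, q (X ω) j ∂P = 0 := (hmap _ (hqjm j)).trans (hqj0 j)
      rw [integral_add (integrable_const (ub j)) hint, hzero, integral_const]
      simp
    · show (∫ _ : Ω, u j ∂P) = u j
      simp
  -- (ii)
  have hS' : ∀ q : (Fin n → ℝ) → Fin mL → ℝ,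
      (fun ω => Sum.elim (X ω) (Sum.elim (q (X ω)) (0 : Fin mR → ℝ))) = Sfun 0 0 q := by
    intro q
    funext ω
    show _ = Sum.elim (X ω) (Sum.elim (0 + q (X ω)) 0)
    rw [zero_add]
  have hcov : ∀ (ub : Fin mL → ℝ) (u : Fin mR → ℝ) (q : (Fin n → ℝ) → Fin mL → ℝ),
      Feasible n mL θ q →
      vecCov P (Sfun ub u q) =
        vecCov P (fun ω => Sum.elim (X ω) (Sum.elim (q (X ω)) (0 : Fin mR → ℝ))) := by
    intro ub u q hq
    have h1 := hmean ub u q hq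
    have h2 : vecMean P (fun ω => Sum.elim (X ω) (Sum.elim (q (X ω)) (0 : Fin mR → ℝ)))
        = Sum.elim (measMean θ) (Sum.elim 0 0) := by
      rw [hS' q]; exact hmean 0 0 q hq
    have hpt : ∀ (i : Fin n ⊕ (Fin mL ⊕ Fin mR)) (ω : Ω),
        Sfun ub u q ω i - vecMean P (Sfun ub u q) i =
        Sum.elim (X ω) (Sum.elim (q (X ω)) (0 : Fin mR → ℝ)) i -
          vecMean P (fun ω => Sum.elim (X ω) (Sum.elim (q (X ω)) (0 : Fin mR → ℝ))) i := by
      intro i ω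
      rw [h1, h2]
      rcases i with k | j | j
      · rfl
      · show (ub j + q (X ω) j) - ub j = q (X ω) j - 0
        ring
      · show u j - u j = (0 : ℝ) - 0
        simp
    ext i j
    simp only [vecCov, Matrix.of_apply]
    congr 1
    funext ω
    rw [hpt i ω, hpt j ω]
  refine ⟨fun ub u q hq => ⟨hmean ub u q hq, hcov ub u q hq⟩, ?_⟩
  -- (iii)
  have hfeas0 : Feasible n mL θ (fun _ => 0) := by
    refine ⟨measurable_const, ?_, by simp⟩
    simpa using integrable_const (0 : ℝ)
  set A : Set EReal := {v : EReal | ∃ (ub : Fin mL → ℝ) (u : Fin mR → ℝ),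
      v = ((Sum.elim (measMean θ) (Sum.elim ub u) ⬝ᵥ
          G.mulVec (Sum.elim (measMean θ) (Sum.elim ub u)) : ℝ) : EReal)} with hA_def
  set B : Set EReal := {v : EReal | ∃ q : (Fin n → ℝ) → Fin mL → ℝ, Feasible n mL θ q ∧
      v = (((Gt * vecCov P
          (fun ω => Sum.elim (X ω) (Sum.elim (q (X ω)) (0 : Fin mR → ℝ)))).trace : ℝ)
        : EReal)} with hB_def
  have hLset : {v : EReal | ∃ (ub : Fin mL → ℝ) (u : Fin mR → ℝ)
        (q : (Fin n → ℝ) → Fin mL → ℝ), Feasible n mL θ q ∧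
        v = ((vecMean P (Sfun ub u q) ⬝ᵥ G.mulVec (vecMean P (Sfun ub u q)) +
            (Gt * vecCov P (Sfun ub u q)).trace : ℝ) : EReal)} =
      {v | ∃ a ∈ A, ∃ b ∈ B, v = a + b} := by
    ext v
    constructor
    · rintro ⟨ub, u, q, hq, rfl⟩
      refine ⟨_, ⟨ub, u, rfl⟩, _, ⟨q, hq, rfl⟩, ?_⟩
      rw [hmean ub u q hq, hcov ub u q hq, EReal.coe_add]
    · rintro ⟨a, ⟨ub, u, rfl⟩, b, ⟨q, hq, rfl⟩, rfl⟩
      refine ⟨ub, u, q, hq, ?_⟩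
      rw [hmean ub u q hq, hcov ub u q hq, EReal.coe_add]
  rw [hLset]
  apply aux_sInf_add
  · exact ⟨_, 0, 0, rfl⟩
  · exact ⟨_, (fun _ => 0), hfeas0, rfl⟩
  · rintro a ⟨ub, u, rfl⟩
    exact EReal.coe_ne_top _
  · rintro b ⟨q, hq, rfl⟩
    exact EReal.coe_ne_top _
end

section
/- Let θ be a probability measure on ℝⁿ with finite second moment, let X be a random vector with distribution θ, and let G and G̃ be symmetric positive definite matrices of size (n+m_L+m_R), with blocks indexed by X (first n coordinates), L (next m_L coordinates), R (last m_R coordinates). Define P := G^{XX} − [G^{XL}, G^{XR}] ([[G^{LL}, G^{LR}], [G^{RL}, G^{RR}]])⁻¹ [G^{LX}; G^{RX}] and P̃ := G̃^{XX} − G̃^{XL} (G̃^{LL})⁻¹ G̃^{LX}. Then the infimum, over all ū ∈ ℝ^{m_L}, u ∈ ℝ^{m_R}, and measurable q : ℝⁿ → ℝ^{m_L} with ∫ ‖q(x)‖² θ(dx) < ∞ and ∫ q(x) θ(dx) = 0, of (E[S])ᵀ G (E[S]) + tr(G̃ · Cov(S)) with S := [X; ū + q(X); u], equals μ(θ)ᵀ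 P μ(θ) + tr(P̃ · Cov(θ)); moreover, this infimum is attained at [ū*; u*] = −([[G^{LL}, G^{LR}], [G^{RL}, G^{RR}]])⁻¹ [G^{LX}; G^{RX}] μ(θ) and q*(x) = −(G̃^{LL})⁻¹ G̃^{LX} (x − μ(θ)). -/
open Matrix MeasureTheory

set_option linter.unusedSectionVars false
set_option maxHeartbeats 1600000

section AuxLemmas
open Matrix

set_option linter.unusedSectionVars false
set_option maxHeartbeats 800000

section Alg
variable {a b : Type*} [Fintype a] [Fintype b] [DecidableEq a] [DecidableEq b]

lemma schur_quad (H : Matrix (a ⊕ b) (a ⊕ b) ℝ) (hH : H.PosDef)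
    (x : a → ℝ) (y : b → ℝ) :
    Sum.elim x y ⬝ᵥ H.mulVec (Sum.elim x y) =
      x ⬝ᵥ (H.submatrix Sum.inl Sum.inl -
        H.submatrix Sum.inl Sum.inr * (H.submatrix Sum.inr Sum.inr)⁻¹ *
          H.submatrix Sum.inr Sum.inl).mulVec x +
      (y + (H.submatrix Sum.inr Sum.inr)⁻¹.mulVec
          ((H.submatrix Sum.inr Sum.inl).mulVec x)) ⬝ᵥ
        (H.submatrix Sum.inr Sum.inr).mulVec
          (y + (H.submatrix Sum.inr Sum.inr)⁻¹.mulVec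
            ((H.submatrix Sum.inr Sum.inl).mulVec x)) := by
  set A := H.submatrix Sum.inl Sum.inl with hA
  set B := H.submatrix Sum.inl Sum.inr with hB
  set C := H.submatrix Sum.inr Sum.inl with hC
  set D := H.submatrix Sum.inr Sum.inr with hD
  have hDpd : D.PosDef := by
    refine PosDef.of_dotProduct_mulVec_pos (hH.1.submatrix _) (fun y hy => ?_)
    have hz : (Sum.elim 0 y : a ⊕ b → ℝ) ≠ 0 := by
      intro h; apply hy; ext i; exact congrFun h (Sum.inr i)
    have := hH.dotProduct_mulVec_pos hz
    simpa [Matrix.mulVec, dotProduct, Fintype.sum_sum_type, hD] using this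
  have hDdet : IsUnit D.det := hDpd.det_pos.ne'.isUnit
  have hDinv : D * D⁻¹ = 1 := Matrix.mul_nonsing_inv D hDdet
  have hDsymm : Dᵀ = D := by
    have := hH.1.submatrix (Sum.inr : b → a ⊕ b)
    simpa [Matrix.IsHermitian, hD] using this
  have hBC : Bᵀ = C := by
    ext i j
    exact (congrFun (congrFun hH.1 (Sum.inl j)) (Sum.inr i) :
      H (Sum.inr i) (Sum.inl j) = H (Sum.inl j) (Sum.inr i)).symm
  set w := D⁻¹.mulVec (C.mulVec x) with hw
  have hDw : D.mulVec w = C.mulVec x := by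
    rw [hw, Matrix.mulVec_mulVec, Matrix.mulVec_mulVec, hDinv, Matrix.one_mul]
  have hB' : B = Cᵀ := by rw [← hBC, Matrix.transpose_transpose]
  have hLHS : H = Matrix.fromBlocks A B C D := (Matrix.fromBlocks_toBlocks H).symm
  rw [hLHS, Matrix.fromBlocks_mulVec, sumElim_dotProduct_sumElim]
  have key1 : x ⬝ᵥ B.mulVec y = C.mulVec x ⬝ᵥ y := by
    rw [Matrix.dotProduct_mulVec, hB', Matrix.vecMul_transpose]
  have key2 : w ⬝ᵥ D.mulVec y = C.mulVec x ⬝ᵥ y := by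
    rw [Matrix.dotProduct_mulVec, ← hDsymm, Matrix.vecMul_transpose, hDw]
  have key3 : w ⬝ᵥ D.mulVec w = x ⬝ᵥ (B * D⁻¹ * C).mulVec x := by
    rw [hDw, hw, Matrix.mulVec_mulVec, Matrix.dotProduct_mulVec, ← hBC,
      Matrix.vecMul_transpose, Matrix.mulVec_mulVec, dotProduct_comm,
      Matrix.mul_assoc]
  have key4 : y ⬝ᵥ D.mulVec w = y ⬝ᵥ C.mulVec x := by rw [hDw]
  simp only [Matrix.mulVec_add, dotProduct_add, add_dotProduct,
    Matrix.sub_mulVec, dotProduct_sub, Sum.elim_comp_inl, Sum.elim_comp_inr,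
    key1, key2, key3, key4]
  have h5 : C.mulVec x ⬝ᵥ y = y ⬝ᵥ C.mulVec x := dotProduct_comm _ _
  linarith [h5]
end Alg
open Matrix MeasureTheory

lemma int_mul {α : Type*} [MeasurableSpace α] {μ : Measure α} {f g : α → ℝ}
    (hf : AEStronglyMeasurable f μ) (hg : AEStronglyMeasurable g μ)
    (hf2 : Integrable (fun x => f x ^ 2) μ) (hg2 : Integrable (fun x => g x ^ 2) μ) :
    Integrable (fun x => f x * g x) μ := by
  refine Integrable.mono' (((hf2.add hg2)).div_const 2) (hf.mul hg) ?_
  filter_upwards with x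
  simp only [Pi.add_apply]
  rw [Real.norm_eq_abs, abs_mul]
  have h := two_mul_le_add_sq |f x| |g x|
  rw [sq_abs, sq_abs] at h
  nlinarith [abs_nonneg (f x), abs_nonneg (g x)]

lemma sq_comp_int {α : Type*} [MeasurableSpace α] {μ : Measure α} {k : Type*}
    [Fintype k] {f : α → k → ℝ} (hf : AEStronglyMeasurable f μ)
    (h2 : Integrable (fun x => ‖f x‖ ^ 2) μ) (i : k) :
    Integrable (fun x => f x i ^ 2) μ := by
  refine Integrable.mono' h2 ?_ ?_
  · exact ((continuous_apply i).comp_aestronglyMeasurable hf).pow 2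
  · filter_upwards with x
    rw [Real.norm_eq_abs, abs_pow, sq_abs]
    have h1 := norm_le_pi_norm (f x) i
    rw [Real.norm_eq_abs] at h1
    nlinarith [norm_nonneg (f x), abs_nonneg (f x i), sq_abs (f x i)]

lemma trace_mul_int {α : Type*} [MeasurableSpace α] (μ : Measure α) {k : Type*}
    [Fintype k] (M : Matrix k k ℝ) (Z : α → k → ℝ)
    (hZZ : ∀ i j, Integrable (fun x => Z x i * Z x j) μ) :
    (M * Matrix.of fun i j => ∫ x, Z x i * Z x j ∂μ).trace =
      ∫ x, Z x ⬝ᵥ M.mulVec (Z x) ∂μ := by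
  have h1 : ∀ i : k, (∑ j, M i j * ∫ x, Z x j * Z x i ∂μ) =
      ∫ x, ∑ j, M i j * (Z x j * Z x i) ∂μ := by
    intro i
    rw [integral_finset_sum _ (fun j _ => (hZZ j i).const_mul _)]
    simp [MeasureTheory.integral_const_mul]
  calc (M * Matrix.of fun i j => ∫ x, Z x i * Z x j ∂μ).trace
      = ∑ i, ∑ j, M i j * ∫ x, Z x j * Z x i ∂μ := by
        simp [Matrix.trace, Matrix.mul_apply, Matrix.diag]
    _ = ∑ i, ∫ x, ∑ j, M i j * (Z x j * Z x i) ∂μ := by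
        exact Finset.sum_congr rfl (fun i _ => h1 i)
    _ = ∫ x, ∑ i, ∑ j, M i j * (Z x j * Z x i) ∂μ := by
        exact (integral_finset_sum _ (fun i _ =>
          integrable_finset_sum _ (fun j _ => (hZZ j i).const_mul _))).symm
    _ = ∫ x, Z x ⬝ᵥ M.mulVec (Z x) ∂μ := by
        refine integral_congr_ae (Filter.Eventually.of_forall fun x => ?_)
        simp only [dotProduct, Matrix.mulVec, Finset.mul_sum]
        exact Finset.sum_congr rfl fun i _ => Finset.sum_congr rfl fun j _ => by ring
open Matrix

variable {a b c : Type*} [Fintype a] [Fintype b] [Fintype c]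

lemma posdef_sub_inr {a b : Type*} [Fintype a] [Fintype b]
    {H : Matrix (a ⊕ b) (a ⊕ b) ℝ} (hH : H.PosDef) :
    (H.submatrix Sum.inr Sum.inr).PosDef := by
  refine PosDef.of_dotProduct_mulVec_pos (hH.1.submatrix _) (fun y hy => ?_)
  have hz : (Sum.elim 0 y : a ⊕ b → ℝ) ≠ 0 := by
    intro h; apply hy; ext i; exact congrFun h (Sum.inr i)
  have := hH.dotProduct_mulVec_pos hz
  simpa [Matrix.mulVec, dotProduct, Fintype.sum_sum_type] using this

lemma pad_quad (M : Matrix (a ⊕ (b ⊕ c)) (a ⊕ (b ⊕ c)) ℝ) (v : a → ℝ) (w : b → ℝ) :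
    Sum.elim v (Sum.elim w 0) ⬝ᵥ M.mulVec (Sum.elim v (Sum.elim w 0)) =
      Sum.elim v w ⬝ᵥ
        (M.submatrix (Sum.map id Sum.inl) (Sum.map id Sum.inl)).mulVec (Sum.elim v w) := by
  simp [Matrix.mulVec, dotProduct, Fintype.sum_sum_type, Matrix.submatrix_apply]

lemma posdef_pad {M : Matrix (a ⊕ (b ⊕ c)) (a ⊕ (b ⊕ c)) ℝ} (hM : M.PosDef) :
    (M.submatrix (Sum.map id Sum.inl) (Sum.map id Sum.inl)).PosDef := by
  refine PosDef.of_dotProduct_mulVec_pos (hM.1.submatrix _) (fun z hz => ?_)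
  have hz' : (Sum.elim (z ∘ Sum.inl) (Sum.elim (z ∘ Sum.inr) 0) : a ⊕ (b ⊕ c) → ℝ) ≠ 0 := by
    intro h
    apply hz
    ext i
    cases i with
    | inl i => exact congrFun h (Sum.inl i)
    | inr i => exact congrFun h (Sum.inr (Sum.inl i))
  have h2 := hM.dotProduct_mulVec_pos hz'
  simp only [star_trivial] at h2 ⊢
  rwa [pad_quad, Sum.elim_comp_inl_inr] at h2

lemma int_of_sq {α : Type*} [MeasurableSpace α] {μ : Measure α} [IsFiniteMeasure μ]
    {f : α → ℝ} (hf : AEStronglyMeasurable f μ)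
    (h2 : Integrable (fun x => f x ^ 2) μ) : Integrable f μ := by
  refine Integrable.mono' ((h2.add (integrable_const 1)).div_const 2) hf ?_
  filter_upwards with x
  simp only [Pi.add_apply]
  rw [Real.norm_eq_abs]
  nlinarith [sq_abs (f x), sq_nonneg (|f x| - 1)]

lemma quad_integrable {α : Type*} [MeasurableSpace α] {μ : Measure α} {k : Type*}
    [Fintype k] (M : Matrix k k ℝ) (Z : α → k → ℝ)
    (hZZ : ∀ i j, Integrable (fun x => Z x i * Z x j) μ) :
    Integrable (fun x => Z x ⬝ᵥ M.mulVec (Z x)) μ := by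
  have heq : (fun x => Z x ⬝ᵥ M.mulVec (Z x)) =
      fun x => ∑ i, ∑ j, M i j * (Z x j * Z x i) := by
    funext x
    simp only [dotProduct, Matrix.mulVec, Finset.mul_sum]
    exact Finset.sum_congr rfl fun i _ => Finset.sum_congr rfl fun j _ => by ring
  rw [heq]
  exact integrable_finset_sum _ (fun i _ =>
    integrable_finset_sum _ (fun j _ => (hZZ j i).const_mul _))

lemma integral_pi_apply {α : Type*} [MeasurableSpace α] {μ : Measure α} {k : ℕ}
    {f : α → Fin k → ℝ} (hf : Integrable f μ) (i : Fin k) :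
    (∫ x, f x ∂μ) i = ∫ x, f x i ∂μ := by
  have := (ContinuousLinearMap.proj (R := ℝ) (φ := fun _ : Fin k => ℝ) i).integral_comp_comm hf
  simpa using this.symm

end AuxLemmas

/-- For symmetric positive definite `G`, `G̃` of size
`n + mL + mR`, with `P` the Schur complement of the lower-right
`(mL+mR)`-block of `G` and `P̃` the Schur complement of the `L`-block in the
top-left `(n+mL)`-submatrix of `G̃`, the infimum over `(ū, u, q)` (with `q`
feasible) of `E[S]ᵀ G E[S] + tr(G̃ Cov(S))`, where `S = [X; ū + q(X); u]`,
equals `μ(θ)ᵀ P μ(θ) + tr(P̃ Cov(θ))`, attained at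
`[ū*; u*] = −([[Gᴸᴸ,Gᴸᴿ],[Gᴿᴸ,Gᴿᴿ]])⁻¹ [Gᴸˣ; Gᴿˣ] μ(θ)` and
`q*(x) = −(G̃ᴸᴸ)⁻¹ G̃ᴸˣ (x − μ(θ))`. -/
theorem stmt13 (n mL mR : ℕ)
    (θ : Measure (Fin n → ℝ)) [IsProbabilityMeasure θ]
    (hθ2 : Integrable (fun x => ‖x‖ ^ 2) θ)
    {Ω : Type*} [MeasurableSpace Ω] (P : Measure Ω) [IsProbabilityMeasure P]
    (X : Ω → Fin n → ℝ) (hX : Measurable X) (hXlaw : Measure.map X P = θ)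
    (G Gt : Matrix (Fin n ⊕ (Fin mL ⊕ Fin mR)) (Fin n ⊕ (Fin mL ⊕ Fin mR)) ℝ)
    (hG : G.PosDef) (hGt : Gt.PosDef) :
    let Sfun : (Fin mL → ℝ) → (Fin mR → ℝ) → ((Fin n → ℝ) → Fin mL → ℝ) →
        Ω → (Fin n ⊕ (Fin mL ⊕ Fin mR)) → ℝ :=
      fun ub u q ω => Sum.elim (X ω) (Sum.elim (ub + q (X ω)) u)
    let val : (Fin mL → ℝ) → (Fin mR → ℝ) → ((Fin n → ℝ) → Fin mL → ℝ) → ℝ :=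
      fun ub u q =>
        vecMean P (Sfun ub u q) ⬝ᵥ G.mulVec (vecMean P (Sfun ub u q)) +
          (Gt * vecCov P (Sfun ub u q)).trace
    let Pm := G.submatrix Sum.inl Sum.inl -
      G.submatrix Sum.inl Sum.inr * (G.submatrix Sum.inr Sum.inr)⁻¹ *
        G.submatrix Sum.inr Sum.inl
    let Ptm := Gt.submatrix Sum.inl Sum.inl -
      Gt.submatrix Sum.inl (fun j : Fin mL => Sum.inr (Sum.inl j)) *
        (Gt.submatrix (fun i : Fin mL => Sum.inr (Sum.inl i))
          (fun j : Fin mL => Sum.inr (Sum.inl j)))⁻¹ *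
        Gt.submatrix (fun i : Fin mL => Sum.inr (Sum.inl i)) Sum.inl
    let target : ℝ :=
      measMean θ ⬝ᵥ Pm.mulVec (measMean θ) + (Ptm * measCov θ).trace
    -- the optimal stacked vector [ū*; u*]
    let uu : Fin mL ⊕ Fin mR → ℝ :=
      -((G.submatrix Sum.inr Sum.inr)⁻¹.mulVec
        ((G.submatrix Sum.inr Sum.inl).mulVec (measMean θ)))
    let ubstar : Fin mL → ℝ := fun i => uu (Sum.inl i)
    let ustar : Fin mR → ℝ := fun i => uu (Sum.inr i)
    let qstar : (Fin n → ℝ) → Fin mL → ℝ := fun x =>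
      -((Gt.submatrix (fun i : Fin mL => Sum.inr (Sum.inl i))
            (fun j : Fin mL => Sum.inr (Sum.inl j)))⁻¹.mulVec
        ((Gt.submatrix (fun i : Fin mL => Sum.inr (Sum.inl i)) Sum.inl).mulVec
          (x - measMean θ)))
    -- `target` is a lower bound over all feasible choices
    (∀ (ub : Fin mL → ℝ) (u : Fin mR → ℝ) (q : (Fin n → ℝ) → Fin mL → ℝ),
        Feasible n mL θ q → target ≤ val ub u q) ∧
    -- and it is attained at the stated optimizer
    Feasible n mL θ qstar ∧ val ubstar ustar qstar = target := by
  intro Sfun val Pm Ptm target uu ubstar ustar qstar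
  set μv : Fin n → ℝ := measMean θ with hμv
  set Gt' : Matrix ((Fin n) ⊕ (Fin mL)) ((Fin n) ⊕ (Fin mL)) ℝ :=
    Gt.submatrix (Sum.map id Sum.inl) (Sum.map id Sum.inl) with hGt'
  have hGt'pd : Gt'.PosDef := posdef_pad hGt
  -- basic integrability facts about θ
  have hxi2 : ∀ i, Integrable (fun x : Fin n → ℝ => x i ^ 2) θ :=
    fun i => sq_comp_int aestronglyMeasurable_id hθ2 i
  have hxi : ∀ i, Integrable (fun x : Fin n → ℝ => x i) θ :=
    fun i => int_of_sq ((measurable_pi_apply i)).aestronglyMeasurable (hxi2 i)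
  have hIntId : Integrable (fun x : Fin n → ℝ => x) θ := by
    refine Integrable.mono' ((hθ2.add (integrable_const 1)).div_const 2)
      aestronglyMeasurable_id ?_
    filter_upwards with x
    simp only [Pi.add_apply]
    nlinarith [norm_nonneg x, sq_nonneg (‖x‖ - 1)]
  have hμvi : ∀ i, μv i = ∫ x, x i ∂θ := fun _ => rfl
  -- components of x - μv
  have hZnm : ∀ i, Measurable (fun x : Fin n → ℝ => (x - μv) i) := by
    intro i
    have : (fun x : Fin n → ℝ => (x - μv) i) = fun x => x i - μv i := rfl
    rw [this]
    exact (measurable_pi_apply i).sub measurable_const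
  have hZn2 : ∀ i, Integrable (fun x : Fin n → ℝ => (x - μv) i ^ 2) θ := by
    intro i
    have h : (fun x : Fin n → ℝ => (x - μv) i ^ 2) =
        fun x => x i ^ 2 - (2 * μv i) * x i + μv i ^ 2 := by
      funext x; simp only [Pi.sub_apply]; ring
    rw [h]
    exact (((hxi2 i).sub ((hxi i).const_mul _)).add (integrable_const _))
  have hZnZn : ∀ i j, Integrable (fun x : Fin n → ℝ => (x - μv) i * (x - μv) j) θ :=
    fun i j => int_mul (hZnm i).aestronglyMeasurable (hZnm j).aestronglyMeasurable
      (hZn2 i) (hZn2 j)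
  -- change of variables
  have hCoV : ∀ (f : (Fin n → ℝ) → ℝ), AEStronglyMeasurable f θ →
      ∫ ω, f (X ω) ∂P = ∫ x, f x ∂θ := by
    intro f hf
    rw [← hXlaw]
    exact (integral_map hX.aemeasurable (by rwa [hXlaw])).symm
  -- target formula
  have hmc : measCov θ = Matrix.of fun i j => ∫ x, (x - μv) i * (x - μv) j ∂θ := rfl
  have htarget : target = μv ⬝ᵥ Pm.mulVec μv +
      ∫ x, (x - μv) ⬝ᵥ Ptm.mulVec (x - μv) ∂θ := by
    have h1 : target = μv ⬝ᵥ Pm.mulVec μv + (Ptm * measCov θ).trace := rfl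
    rw [h1, hmc, trace_mul_int θ Ptm _ hZnZn]
  -- Schur complement identities
  have hPtm : Ptm = Gt'.submatrix Sum.inl Sum.inl -
      Gt'.submatrix Sum.inl Sum.inr * (Gt'.submatrix Sum.inr Sum.inr)⁻¹ *
        Gt'.submatrix Sum.inr Sum.inl := rfl
  -- the key val formula for any feasible q
  have hkey : ∀ (ub : Fin mL → ℝ) (u : Fin mR → ℝ) (q : (Fin n → ℝ) → Fin mL → ℝ),
      Feasible n mL θ q →
      val ub u q =
        Sum.elim μv (Sum.elim ub u) ⬝ᵥ G.mulVec (Sum.elim μv (Sum.elim ub u)) +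
          ∫ x, Sum.elim (x - μv) (q x) ⬝ᵥ Gt'.mulVec (Sum.elim (x - μv) (q x)) ∂θ ∧
      Integrable (fun x : Fin n → ℝ =>
        Sum.elim (x - μv) (q x) ⬝ᵥ Gt'.mulVec (Sum.elim (x - μv) (q x))) θ := by
    intro ub u q hq
    obtain ⟨hqm, hq2, hq0⟩ := hq
    have hqsm : ∀ i, Measurable (fun x => q x i) :=
      fun i => (measurable_pi_apply i).comp hqm
    have hqi2 : ∀ i, Integrable (fun x => q x i ^ 2) θ :=
      fun i => sq_comp_int hqm.aestronglyMeasurable hq2 i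
    have hqIi : ∀ i, Integrable (fun x => q x i) θ :=
      fun i => int_of_sq (hqsm i).aestronglyMeasurable (hqi2 i)
    have hqint : Integrable q θ := by
      refine Integrable.mono' ((hq2.add (integrable_const 1)).div_const 2)
        hqm.aestronglyMeasurable ?_
      filter_upwards with x
      simp only [Pi.add_apply]
      nlinarith [norm_nonneg (q x), sq_nonneg (‖q x‖ - 1)]
    have hq0i : ∀ i, ∫ x, q x i ∂θ = 0 := by
      intro i
      rw [← integral_pi_apply hqint i, hq0]
      rfl
    -- the centered full vector
    set W : (Fin n → ℝ) → (Fin n ⊕ (Fin mL ⊕ Fin mR)) → ℝ :=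
      fun x => Sum.elim (x - μv) (Sum.elim (q x) 0) with hWdef
    have hWm : ∀ i, Measurable (fun x => W x i) := by
      intro i
      rcases i with i | i
      · exact hZnm i
      · rcases i with i | i
        · exact hqsm i
        · exact measurable_const
    have hW2 : ∀ i, Integrable (fun x => W x i ^ 2) θ := by
      intro i
      rcases i with i | i
      · exact hZn2 i
      · rcases i with i | i
        · exact hqi2 i
        · have h0 : Integrable (fun _ : Fin n → ℝ => (0:ℝ)) θ := integrable_const 0
          have he : (fun x : Fin n → ℝ => W x (Sum.inr (Sum.inr i)) ^ 2) =
              fun _ => (0:ℝ) := by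
            funext x; simp [hWdef]
          rw [he]; exact h0
    have hWW : ∀ i j, Integrable (fun x => W x i * W x j) θ :=
      fun i j => int_mul (hWm i).aestronglyMeasurable (hWm j).aestronglyMeasurable
        (hW2 i) (hW2 j)
    -- the mean of S
    have hmean : vecMean P (Sfun ub u q) = Sum.elim μv (Sum.elim ub u) := by
      funext i
      rcases i with i | i
      · show (∫ ω, X ω i ∂P) = μv i
        exact (hCoV (fun x => x i) (measurable_pi_apply i).aestronglyMeasurable).trans
          (hμvi i).symm
      · rcases i with i | i
        · show (∫ ω, (ub i + q (X ω) i) ∂P) = ub i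
          have h1 : (∫ ω, (ub i + q (X ω) i) ∂P) = ∫ x, (ub i + q x i) ∂θ :=
            hCoV (fun x => ub i + q x i)
              ((measurable_const.add (hqsm i)).aestronglyMeasurable)
          rw [h1, integral_add (integrable_const _) (hqIi i), hq0i i]
          simp
        · show (∫ ω, u i ∂P) = u i
          simp
    -- the covariance of S
    have hcov : vecCov P (Sfun ub u q) =
        Matrix.of fun i j => ∫ x, W x i * W x j ∂θ := by
      ext i j
      show (∫ ω, (Sfun ub u q ω i - vecMean P (Sfun ub u q) i) *
        (Sfun ub u q ω j - vecMean P (Sfun ub u q) j) ∂P) = ∫ x, W x i * W x j ∂θ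
      have hpt : ∀ (k : Fin n ⊕ (Fin mL ⊕ Fin mR)) (ω : Ω),
          Sfun ub u q ω k - vecMean P (Sfun ub u q) k = W (X ω) k := by
        intro k ω
        rw [hmean]
        rcases k with k | k
        · show X ω k - μv k = (X ω - μv) k
          simp
        · rcases k with k | k
          · show (ub k + q (X ω) k) - ub k = q (X ω) k
            ring
          · show u k - u k = (0 : Fin mR → ℝ) k
            simp
      have h2 : (∫ ω, (Sfun ub u q ω i - vecMean P (Sfun ub u q) i) *
          (Sfun ub u q ω j - vecMean P (Sfun ub u q) j) ∂P) =
          ∫ ω, W (X ω) i * W (X ω) j ∂P := by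
        refine integral_congr_ae (Filter.Eventually.of_forall fun ω => ?_)
        simp only [hpt]
      rw [h2]
      exact hCoV (fun x => W x i * W x j) ((hWm i).mul (hWm j)).aestronglyMeasurable
    constructor
    · have h3 : val ub u q =
          Sum.elim μv (Sum.elim ub u) ⬝ᵥ G.mulVec (Sum.elim μv (Sum.elim ub u)) +
            (Gt * vecCov P (Sfun ub u q)).trace := by
        show vecMean P (Sfun ub u q) ⬝ᵥ G.mulVec (vecMean P (Sfun ub u q)) +
            (Gt * vecCov P (Sfun ub u q)).trace = _
        rw [hmean]
      rw [h3, hcov, trace_mul_int θ Gt W hWW]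
      congr 1
      refine integral_congr_ae (Filter.Eventually.of_forall fun x => ?_)
      exact pad_quad Gt (x - μv) (q x)
    · have h4 : (fun x : Fin n → ℝ =>
          Sum.elim (x - μv) (q x) ⬝ᵥ Gt'.mulVec (Sum.elim (x - μv) (q x))) =
          fun x => W x ⬝ᵥ Gt.mulVec (W x) := by
        funext x
        exact (pad_quad Gt (x - μv) (q x)).symm
      rw [h4]
      exact quad_integrable Gt W hWW
  -- positivity facts
  have hDpd : (G.submatrix Sum.inr Sum.inr).PosDef := posdef_sub_inr hG
  have hD2pd : (Gt'.submatrix Sum.inr Sum.inr).PosDef := posdef_sub_inr hGt'pd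
  have hquadGnn : ∀ v : Fin mL ⊕ Fin mR → ℝ,
      0 ≤ v ⬝ᵥ (G.submatrix Sum.inr Sum.inr).mulVec v := by
    intro v; have := hDpd.posSemidef.dotProduct_mulVec_nonneg v; simpa using this
  have hquadGtnn : ∀ v : Fin mL → ℝ,
      0 ≤ v ⬝ᵥ (Gt'.submatrix Sum.inr Sum.inr).mulVec v := by
    intro v; have := hD2pd.posSemidef.dotProduct_mulVec_nonneg v; simpa using this
  have hPmdef : Pm = G.submatrix Sum.inl Sum.inl -
      G.submatrix Sum.inl Sum.inr * (G.submatrix Sum.inr Sum.inr)⁻¹ *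
        G.submatrix Sum.inr Sum.inl := rfl
  -- Feasibility of qstar
  set K : Matrix (Fin mL) (Fin n) ℝ :=
    -((Gt.submatrix (fun i : Fin mL => Sum.inr (Sum.inl i))
          (fun j : Fin mL => Sum.inr (Sum.inl j)))⁻¹ *
      Gt.submatrix (fun i : Fin mL => Sum.inr (Sum.inl i)) Sum.inl) with hK
  have hqstar_eq : qstar = fun x => K.mulVec (x - μv) := by
    funext x
    show -((Gt.submatrix (fun i : Fin mL => Sum.inr (Sum.inl i))
          (fun j : Fin mL => Sum.inr (Sum.inl j)))⁻¹.mulVec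
        ((Gt.submatrix (fun i : Fin mL => Sum.inr (Sum.inl i)) Sum.inl).mulVec
          (x - μv))) = K.mulVec (x - μv)
    rw [hK, Matrix.neg_mulVec, Matrix.mulVec_mulVec]
  set L : (Fin n → ℝ) →L[ℝ] (Fin mL → ℝ) :=
    LinearMap.toContinuousLinearMap (Matrix.mulVecLin K) with hL
  have hLapp : ∀ v, L v = K.mulVec v := fun v => rfl
  have hcont : Continuous (fun x : Fin n → ℝ => K.mulVec (x - μv)) := by
    have : (fun x : Fin n → ℝ => K.mulVec (x - μv)) = fun x => L (x - μv) := by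
      funext x; rw [hLapp]
    rw [this]
    exact L.continuous.comp (continuous_id.sub continuous_const)
  have hsubint : Integrable (fun x : Fin n → ℝ => x - μv) θ :=
    hIntId.sub (integrable_const _)
  have hfeas : Feasible n mL θ qstar := by
    refine ⟨?_, ?_, ?_⟩
    · rw [hqstar_eq]
      exact hcont.measurable
    · rw [hqstar_eq]
      have hb : Integrable (fun x : Fin n → ℝ =>
          ‖L‖ ^ 2 * (2 * ‖x‖ ^ 2 + 2 * ‖μv‖ ^ 2)) θ :=
        ((hθ2.const_mul 2).add (integrable_const (2 * ‖μv‖ ^ 2))).const_mul _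
      refine Integrable.mono' hb ((hcont.norm.pow 2).aestronglyMeasurable) ?_
      filter_upwards with x
      have h1 : ‖K.mulVec (x - μv)‖ ≤ ‖L‖ * ‖x - μv‖ := by
        rw [← hLapp]; exact L.le_opNorm _
      have h2 : ‖x - μv‖ ≤ ‖x‖ + ‖μv‖ := norm_sub_le _ _
      rw [Real.norm_eq_abs, abs_of_nonneg (by positivity)]
      have h3 : ‖K.mulVec (x - μv)‖ * ‖K.mulVec (x - μv)‖ ≤
          (‖L‖ * ‖x - μv‖) * (‖L‖ * ‖x - μv‖) :=
        mul_le_mul h1 h1 (norm_nonneg _)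
          (mul_nonneg (norm_nonneg L) (norm_nonneg _))
      have h4 : ‖x - μv‖ * ‖x - μv‖ ≤ (‖x‖ + ‖μv‖) * (‖x‖ + ‖μv‖) :=
        mul_le_mul h2 h2 (norm_nonneg _)
          (add_nonneg (norm_nonneg _) (norm_nonneg _))
      nlinarith [norm_nonneg (K.mulVec (x - μv)), norm_nonneg x, norm_nonneg μv,
        norm_nonneg L, norm_nonneg (x - μv), sq_nonneg (‖x‖ - ‖μv‖),
        sq_nonneg ‖L‖]
    · rw [hqstar_eq]
      have h0 : (∫ x, x - μv ∂θ) = 0 := by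
        funext i
        rw [integral_pi_apply hsubint i]
        have he : (fun x : Fin n → ℝ => (x - μv) i) = fun x => x i - μv i := rfl
        rw [he, integral_sub (hxi i) (integrable_const _), ← hμvi i]
        simp
      calc (∫ x, K.mulVec (x - μv) ∂θ) = L (∫ x, x - μv ∂θ) :=
            L.integral_comp_comm hsubint
        _ = 0 := by rw [h0]; exact map_zero L
  refine ⟨?_, hfeas, ?_⟩
  · -- lower bound
    intro ub u q hq
    obtain ⟨hvaleq, hint⟩ := hkey ub u q hq
    rw [htarget, hvaleq]
    have hm := schur_quad G hG μv (Sum.elim ub u)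
    rw [← hPmdef] at hm
    have hpw : ∀ x : Fin n → ℝ, (x - μv) ⬝ᵥ Ptm.mulVec (x - μv) ≤
        Sum.elim (x - μv) (q x) ⬝ᵥ Gt'.mulVec (Sum.elim (x - μv) (q x)) := by
      intro x
      rw [schur_quad Gt' hGt'pd (x - μv) (q x), ← hPtm]
      have := hquadGtnn (q x + (Gt'.submatrix Sum.inr Sum.inr)⁻¹.mulVec
        ((Gt'.submatrix Sum.inr Sum.inl).mulVec (x - μv)))
      linarith
    have hIineq : (∫ x, (x - μv) ⬝ᵥ Ptm.mulVec (x - μv) ∂θ) ≤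
        ∫ x, Sum.elim (x - μv) (q x) ⬝ᵥ Gt'.mulVec (Sum.elim (x - μv) (q x)) ∂θ :=
      integral_mono (quad_integrable Ptm _ hZnZn) hint hpw
    have hq1 := hquadGnn (Sum.elim ub u + (G.submatrix Sum.inr Sum.inr)⁻¹.mulVec
      ((G.submatrix Sum.inr Sum.inl).mulVec μv))
    linarith [hm, hq1, hIineq]
  · -- equality at the optimizer
    obtain ⟨hvaleq, hint⟩ := hkey ubstar ustar qstar hfeas
    rw [hvaleq, htarget]
    have huu : Sum.elim ubstar ustar = uu := by
      funext i; rcases i with i | i <;> rfl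
    rw [huu, schur_quad G hG μv uu, ← hPmdef]
    have huuzero : uu + (G.submatrix Sum.inr Sum.inr)⁻¹.mulVec
        ((G.submatrix Sum.inr Sum.inl).mulVec μv) = 0 := neg_add_cancel _
    rw [huuzero, Matrix.mulVec_zero, dotProduct_zero, add_zero]
    congr 1
    refine integral_congr_ae (Filter.Eventually.of_forall fun x => ?_)
    show Sum.elim (x - μv) (qstar x) ⬝ᵥ Gt'.mulVec (Sum.elim (x - μv) (qstar x)) =
      (x - μv) ⬝ᵥ Ptm.mulVec (x - μv)
    rw [schur_quad Gt' hGt'pd (x - μv) (qstar x), ← hPtm]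
    have hz : qstar x + (Gt'.submatrix Sum.inr Sum.inr)⁻¹.mulVec
        ((Gt'.submatrix Sum.inr Sum.inl).mulVec (x - μv)) = 0 := neg_add_cancel _
    rw [hz, Matrix.mulVec_zero, dotProduct_zero, add_zero]
end
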